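/- arXiv:2110.06260 — 9 statements merged into one kernel-verified Lean document; each statement's English description precedes it below -/
import Mathlib

section
/- Let K be a totally real number field with discriminant Δ. For every totally positive element α of the ring of integers O_K with norm N_{K/ℚ}(α) > Δ there exists β ∈ O_K such that α − β² is totally positive. In particular, every indecomposable element of O_K⁺ has norm at most Δ. -/
open NumberField

/-- A number field is totally real if every complex embedding has image contained in `ℝ`. -/
def IsTotallyRealField (K : Type) [Field K] : Prop :=
  ∀ σ : K →+* ℂ, ∀ x : K, (σ x).im = 0

/-- An element of a field is totally positive if it is positive under every real embedding. -/
def TotallyPositive {K : Type} [Field K] (x : K) : Prop :=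
  ∀ σ : K →+* ℝ, 0 < σ x

section Aux

open NumberField NumberField.InfinitePlace Module NumberField.mixedEmbedding MeasureTheory
open scoped NNReal ENNReal Classical

variable (K : Type) [Field K] [NumberField K]

lemma allReal (hK : IsTotallyRealField K) (w : InfinitePlace K) : IsReal w := by
  rw [InfinitePlace.isReal_iff, NumberField.ComplexEmbedding.isReal_iff]
  ext x
  rw [NumberField.ComplexEmbedding.conjugate_coe_eq]
  exact Complex.conj_eq_iff_im.mpr (hK w.embedding x)

lemma discr_nonneg_of_tr (hK : IsTotallyRealField K) : 0 ≤ NumberField.discr K := by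
  classical
  let f : Module.Free.ChooseBasisIndex ℤ (𝓞 K) ≃ (K →+* ℂ) :=
    (canonicalEmbedding.latticeBasis K).indexEquiv (Pi.basisFun ℂ _)
  let e := f.trans (RingHom.equivRatAlgHom K ℂ)
  have h := Algebra.discr_eq_det_embeddingsMatrixReindex_pow_two ℚ ℂ
    (integralBasis K) e
  set N := Algebra.embeddingsMatrixReindex ℚ ℂ (integralBasis K) e with hN
  have hNreal : ∀ i j, (N i j).im = 0 := by
    intro i j
    simpa [hN, Algebra.embeddingsMatrixReindex, Algebra.embeddingsMatrix] using
      hK (e j).toRingHom (integralBasis K i)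
  let M : Matrix _ _ ℝ := fun i j => (N i j).re
  have hM : N = M.map Complex.ofRealHom := by
    ext i j
    refine Complex.ext rfl ?_
    rw [hNreal i j]; exact (Complex.ofReal_im ((N i j).re)).symm
  have hdet : N.det = Complex.ofRealHom M.det := by
    rw [hM]
    exact (RingHom.map_det Complex.ofRealHom M).symm
  have : ((NumberField.discr K : ℚ) : ℂ) = ((M.det ^ 2 : ℝ) : ℂ) := by
    rw [NumberField.coe_discr]
    rw [show (algebraMap ℚ ℂ) (Algebra.discr ℚ (integralBasis K)) =
      ((Algebra.discr ℚ (integralBasis K) : ℚ) : ℂ) from rfl] at h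
    rw [h, hdet]
    push_cast
    rfl
  have h2 : ((NumberField.discr K : ℚ) : ℝ) = M.det ^ 2 := by
    exact_mod_cast this
  have : (0 : ℝ) ≤ ((NumberField.discr K : ℚ) : ℝ) := h2 ▸ sq_nonneg _
  exact_mod_cast this

lemma main_step (hK : IsTotallyRealField K) (α : 𝓞 K)
    (hα : TotallyPositive (α : K))
    (hN : (NumberField.discr K : ℚ) < Algebra.norm ℚ (α : K)) :
    ∃ β : 𝓞 K, β ≠ 0 ∧ TotallyPositive ((α : K) - (β : K) ^ 2) := by
  classical
  have hreal := allReal K hK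
  have hdnn := discr_nonneg_of_tr K hK
  have hcomplex : nrComplexPlaces K = 0 :=
    Fintype.card_eq_zero_iff.mpr ⟨fun ⟨w, hw⟩ => (not_isReal_iff_isComplex.mpr hw) (hreal w)⟩
  have hrealcard : nrRealPlaces K = finrank ℚ K := by
    have := card_add_two_mul_card_eq_rank K
    omega
  have hmult : ∀ w : InfinitePlace K, mult w = 1 := fun w => by
    rw [InfinitePlace.mult, if_pos (hreal w)]
  -- positivity of w α
  have hwpos : ∀ w : InfinitePlace K, 0 < w (α : K) := by
    intro w
    have := hα (InfinitePlace.embedding_of_isReal (hreal w))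
    rw [← InfinitePlace.norm_embedding_of_isReal (hreal w)]
    simpa using this.ne'
  set f : InfinitePlace K → ℝ≥0 := fun w => NNReal.sqrt (Real.toNNReal (w (α : K))) with hf
  have hnormpos : (0 : ℚ) < Algebra.norm ℚ (α : K) :=
    lt_of_le_of_lt (by exact_mod_cast hdnn) hN
  -- the key product inequality
  have hprod : ‖NumberField.discr K‖₊ < ∏ w : InfinitePlace K, Real.toNNReal (w (α : K)) := by
    rw [← NNReal.coe_lt_coe, NNReal.coe_prod]
    have h1 : ((‖NumberField.discr K‖₊ : ℝ)) = ((NumberField.discr K : ℚ) : ℝ) := by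
      rw [coe_nnnorm, Int.norm_eq_abs, abs_of_nonneg (by exact_mod_cast hdnn)]
      push_cast
      ring
    have h2 : ∀ w : InfinitePlace K, ((Real.toNNReal (w (α : K))) : ℝ) = w (α : K) :=
      fun w => Real.coe_toNNReal _ (hwpos w).le
    simp_rw [h2, h1]
    have h3 : ∏ w : InfinitePlace K, w (α : K) = ((|Algebra.norm ℚ (α : K)| : ℚ) : ℝ) := by
      rw [← prod_eq_abs_norm]
      exact Finset.prod_congr rfl fun w _ => by rw [hmult w, pow_one]
    rw [h3, abs_of_pos hnormpos]
    exact_mod_cast hN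
  have key : NNReal.sqrt ‖NumberField.discr K‖₊ < ∏ w : InfinitePlace K, f w := by
    have h2 : (∏ w : InfinitePlace K, f w) ^ 2 = ∏ w : InfinitePlace K, Real.toNNReal (w (α : K)) := by
      rw [← Finset.prod_pow]
      exact Finset.prod_congr rfl fun w _ => NNReal.sq_sqrt _
    calc NNReal.sqrt ‖NumberField.discr K‖₊
        < NNReal.sqrt ((∏ w : InfinitePlace K, f w) ^ 2) := NNReal.sqrt_lt_sqrt.mpr (h2 ▸ hprod)
      _ = ∏ w : InfinitePlace K, f w := NNReal.sqrt_sq _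
  -- Minkowski
  have hmb : minkowskiBound K ↑1 < volume (convexBodyLT K f) := by
    rw [minkowskiBound, volume_fundamentalDomain_fractionalIdealLatticeBasis, Units.val_one,
      FractionalIdeal.absNorm_one, Rat.cast_one, ENNReal.ofReal_one, one_mul,
      mixedEmbedding.finrank, volume_fundamentalDomain_latticeBasis, hcomplex, pow_zero, one_mul,
      convexBodyLT_volume, convexBodyLTFactor, hcomplex, pow_zero, mul_one, hrealcard]
    simp_rw [hmult, pow_one]
    rw [mul_comm]
    norm_cast
    exact mul_lt_mul_of_pos_left key (by positivity)
  obtain ⟨β, hβ0, hβlt⟩ := exists_ne_zero_mem_ringOfIntegers_lt K hmb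
  refine ⟨β, hβ0, ?_⟩
  intro σ
  set φ : K →+* ℂ := (Complex.ofRealHom : ℝ →+* ℂ).comp σ with hφ
  have hwβ := hβlt (InfinitePlace.mk φ)
  rw [InfinitePlace.apply] at hwβ
  have hφβ : ‖φ (β : K)‖ = |σ (β : K)| := by
    simp [hφ]
  have hφα : (InfinitePlace.mk φ) (α : K) = σ (α : K) := by
    rw [InfinitePlace.apply]
    simp [hφ, abs_of_pos (hα σ)]
  have h1 : |σ (β : K)| < Real.sqrt (σ (α : K)) := by
    have := hwβ
    rw [hφβ] at this
    calc |σ (β : K)| < (f (InfinitePlace.mk φ) : ℝ) := this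
      _ = Real.sqrt (σ (α : K)) := by
          rw [hf]
          simp only [Real.coe_sqrt]
          rw [hφα, Real.coe_toNNReal _ (hα σ).le]
  have h2 : (σ (β : K)) ^ 2 < σ (α : K) := by
    calc (σ (β : K)) ^ 2 = |σ (β : K)| ^ 2 := (sq_abs _).symm
      _ < Real.sqrt (σ (α : K)) ^ 2 := by
          exact pow_lt_pow_left₀ h1 (abs_nonneg _) two_ne_zero
      _ = σ (α : K) := Real.sq_sqrt (hα σ).le
  rw [map_sub, map_pow]
  linarith

end Aux

/-- For every totally positive `α ∈ 𝓞 K` with `N(α) > Δ` there is `β ∈ 𝓞 K` with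
`α - β ^ 2` totally positive; in particular every indecomposable element of `𝓞 K⁺`
has norm at most `Δ`. -/
theorem indecomposable_norm_bound (K : Type) [Field K] [NumberField K]
    (hK : IsTotallyRealField K) :
    (∀ α : 𝓞 K, TotallyPositive (α : K) →
      (NumberField.discr K : ℚ) < Algebra.norm ℚ (α : K) →
      ∃ β : 𝓞 K, TotallyPositive ((α : K) - (β : K) ^ 2)) ∧
    (∀ α : 𝓞 K, TotallyPositive (α : K) →
      (¬ ∃ β : 𝓞 K, TotallyPositive (β : K) ∧ TotallyPositive ((α : K) - (β : K))) →
      Algebra.norm ℚ (α : K) ≤ (NumberField.discr K : ℚ)) := by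
  constructor
  · intro α hα hN
    obtain ⟨β, _, hTP⟩ := main_step K hK α hα hN
    exact ⟨β, hTP⟩
  · intro α hα hind
    by_contra h
    push_neg at h
    obtain ⟨β, hβ0, hTP⟩ := main_step K hK α hα h
    refine hind ⟨β ^ 2, ?_, ?_⟩
    · intro σ
      have : σ (β : K) ≠ 0 := by
        simp only [ne_eq, map_eq_zero]
        exact fun hc => hβ0 (by exact_mod_cast hc)
      push_cast
      rw [map_pow]
      positivity
    · intro σ
      have := hTP σ
      push_cast
      push_cast at this
      convert this using 2
end

section
/- Let K be a totally real number field with discriminant Δ, let P be a positive integer with P(O_K) ≤ P, and let S ⊆ O_K⁺ be a set such that every α ∈ O_K⁺ with N_{K/ℚ}(α) ≤ Δ can be written as α = s·u² for some s ∈ S and some unit u ∈ O_K^×. Then for every γ ∈ O_K⁺ there exist s ∈ S and x, y₁, …, y_P ∈ O_K such that γ = s·x² + y₁² + ⋯ + y_P². Equivalently, the diagonal quadratic form ∑_{s ∈ S} s·x_s² + y₁² + ⋯ + y_P² represents every element of O_K⁺. -/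
open NumberField

open scoped ENNReal NNReal

section helpers

variable {K : Type} [Field K]

/-- Realification of a complex embedding with real image. -/
def UFC.realify (φ : K →+* ℂ) (h : ∀ x, (φ x).im = 0) : K →+* ℝ where
  toFun x := (φ x).re
  map_one' := by simp
  map_zero' := by simp
  map_add' x y := by simp
  map_mul' x y := by
    show (φ (x*y)).re = (φ x).re * (φ y).re
    rw [map_mul, Complex.mul_re, h x, h y, mul_zero, sub_zero]

lemma UFC.realify_spec (φ : K →+* ℂ) (h : ∀ x, (φ x).im = 0) (x : K) :
    φ x = ((UFC.realify φ h x : ℝ) : ℂ) := by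
  rw [Complex.ext_iff]
  constructor
  · simp [UFC.realify]
  · simp [h x]

lemma UFC.isReal_place (hK : IsTotallyRealField K) (w : InfinitePlace K) :
    w.IsReal := by
  rw [NumberField.InfinitePlace.isReal_iff]
  rw [NumberField.ComplexEmbedding.isReal_iff]
  ext x
  simp [NumberField.ComplexEmbedding.conjugate_coe_eq, Complex.conj_eq_iff_im,
    hK w.embedding x]

variable [NumberField K]

open scoped Classical in
lemma UFC.nrComplex_eq_zero (hK : IsTotallyRealField K) :
    NumberField.InfinitePlace.nrRealPlaces K = Module.finrank ℚ K ∧ NumberField.InfinitePlace.nrComplexPlaces K = 0 := by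
  have h0 : NumberField.InfinitePlace.nrComplexPlaces K = 0 := by
    rw [Fintype.card_eq_zero_iff]
    exact ⟨fun w => (NumberField.InfinitePlace.not_isReal_iff_isComplex.2 w.2)
      (UFC.isReal_place hK w.1)⟩
  have := NumberField.InfinitePlace.card_add_two_mul_card_eq_rank K
  rw [h0] at this
  simpa using ⟨this, h0⟩

end helpers

section helpers2

variable {K : Type} [Field K] [NumberField K]

open scoped Classical in
lemma UFC.discr_nonneg (hK : IsTotallyRealField K) : 0 ≤ (NumberField.discr K : ℝ) := by
  set b := NumberField.integralBasis K with hb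
  have hcard : Fintype.card (Module.Free.ChooseBasisIndex ℤ (𝓞 K))
      = Fintype.card (K →ₐ[ℚ] ℂ) := by
    rw [← Module.finrank_eq_card_basis b, AlgHom.card]
  let e := Fintype.equivOfCardEq hcard
  set M := Algebra.embeddingsMatrixReindex ℚ ℂ (⇑b) e with hM
  have h1 : (algebraMap ℚ ℂ) (Algebra.discr ℚ b) = M.det ^ 2 :=
    Algebra.discr_eq_det_embeddingsMatrixReindex_pow_two ℚ ℂ (⇑b) e
  set M' : Matrix (Module.Free.ChooseBasisIndex ℤ (𝓞 K))
      (Module.Free.ChooseBasisIndex ℤ (𝓞 K)) ℝ := fun i j => (M i j).re with hM'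
  have hmap : (Complex.ofRealHom).mapMatrix M' = M := by
    ext i j
    rw [Complex.ext_iff]
    constructor
    · simp [hM']; rfl
    · show (0:ℝ) = (M i j).im
      have : M i j = (e j) (b i) := rfl
      rw [this]
      exact (hK ((e j) : K →+* ℂ) (b i)).symm
  have h2 : (algebraMap ℚ ℂ) (Algebra.discr ℚ b) = ((M'.det ^ 2 : ℝ) : ℂ) := by
    rw [h1, ← hmap, ← RingHom.map_det]
    simp
  have h3 : ((Algebra.discr ℚ b : ℚ) : ℝ) = M'.det ^ 2 := by
    have := congrArg Complex.re h2
    simpa [← Complex.ofReal_pow] using this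
  rw [← NumberField.coe_discr] at h3
  rw [show ((NumberField.discr K : ℝ)) = ((NumberField.discr K : ℚ) : ℝ) by push_cast; ring, h3]
  positivity

lemma UFC.trace_pos (hK : IsTotallyRealField K) {x : K} (hx : TotallyPositive x) :
    0 < Algebra.trace ℚ K x := by
  have h := trace_eq_sum_embeddings (E := ℂ) (K := ℚ) (L := K) (x := x)
  have h2 : ((Algebra.trace ℚ K x : ℚ) : ℝ) = ∑ σ : K →ₐ[ℚ] ℂ, ((σ x).re) := by
    have := congrArg Complex.re h
    simpa [Complex.re_sum] using this
  have hpos : 0 < ((Algebra.trace ℚ K x : ℚ) : ℝ) := by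
    rw [h2]
    have hne : Nonempty (K →ₐ[ℚ] ℂ) := by
      rw [← Fintype.card_pos_iff, AlgHom.card]
      exact Module.finrank_pos
    refine Finset.sum_pos (fun σ _ => ?_) Finset.univ_nonempty
    exact hx (UFC.realify (σ : K →+* ℂ) (hK _))
  exact_mod_cast hpos

end helpers2

section mink
variable {K : Type} [Field K] [NumberField K]

open scoped Classical in
lemma UFC.exists_small_sq (hK : IsTotallyRealField K) {γ : 𝓞 K}
    (hγ : TotallyPositive (γ : K))
    (hn : (NumberField.discr K : ℚ) < Algebra.norm ℚ (γ : K)) :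
    ∃ x : 𝓞 K, x ≠ 0 ∧ ∀ σ : K →+* ℝ, (σ x)^2 < σ γ := by
  obtain ⟨hr1, hr2⟩ := UFC.nrComplex_eq_zero hK
  set n := Module.finrank ℚ K with hn_def
  have hn0 : 0 < n := Module.finrank_pos
  -- real quantities
  set D : ℝ := (NumberField.discr K : ℝ) with hD_def
  have hD : 0 ≤ D := UFC.discr_nonneg hK
  set Nr : ℝ := ((Algebra.norm ℚ ((γ : K)) : ℚ) : ℝ) with hNr_def
  have hDN : D < Nr := by
    rw [hD_def, hNr_def]
    exact_mod_cast hn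
  have hNpos : 0 < Nr := lt_of_le_of_lt hD hDN
  set c : ℝ := (D + Nr) / 2 with hc_def
  have hc1 : D < c := by rw [hc_def]; linarith
  have hc2 : c < Nr := by rw [hc_def]; linarith
  have hcpos : 0 < c := lt_of_le_of_lt hD hc1
  set s : ℝ := (c / Nr) ^ ((n : ℝ)⁻¹) with hs_def
  have hspos : 0 < s := Real.rpow_pos_of_pos (div_pos hcpos hNpos) _
  have hs1 : s < 1 :=
    Real.rpow_lt_one (le_of_lt (div_pos hcpos hNpos)) ((div_lt_one hNpos).2 hc2)
      (by positivity)
  have hsn : s ^ n = c / Nr := by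
    rw [hs_def, ← Real.rpow_natCast (_ ^ _) n, ← Real.rpow_mul (le_of_lt (div_pos hcpos hNpos)),
      inv_mul_cancel₀ (by exact_mod_cast hn0.ne'), Real.rpow_one]
  -- place values of γ
  have hwγ : ∀ w : InfinitePlace K, 0 < w (γ : K) := by
    intro w
    have h1 : w (γ : K) = ‖w.embedding (γ : K)‖ := by
      rw [← NumberField.InfinitePlace.apply, NumberField.InfinitePlace.mk_embedding]
    rw [h1, UFC.realify_spec w.embedding (hK w.embedding), Complex.norm_real, Real.norm_eq_abs,
      abs_of_pos (hγ _)]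
    exact hγ _
  have hmult : ∀ w : InfinitePlace K, w.mult = 1 := fun w => by
    rw [NumberField.InfinitePlace.mult, if_pos (UFC.isReal_place hK w)]
  have hcard : Fintype.card (InfinitePlace K) = n := by
    rw [← hr1]
    exact (Fintype.card_congr (Equiv.subtypeUnivEquiv
      (fun w : InfinitePlace K => UFC.isReal_place hK w))).symm
  -- the weight function
  set f : InfinitePlace K → NNReal := fun w => Real.toNNReal (Real.sqrt (w (γ : K) * s))
    with hf_def
  have hfcoe : ∀ w, ((f w : ℝ)) = Real.sqrt (w (γ : K) * s) := fun w =>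
    Real.coe_toNNReal _ (Real.sqrt_nonneg _)
  have hNq : (0:ℚ) < Algebra.norm ℚ ((γ : K)) := by
    rw [hNr_def] at hNpos; exact_mod_cast hNpos
  have hprodγ : ∏ w : InfinitePlace K, w (γ : K) = Nr := by
    have h := NumberField.InfinitePlace.prod_eq_abs_norm ((γ : K))
    simp_rw [hmult, pow_one] at h
    rw [h, hNr_def, abs_of_pos hNq]
  -- product of the weights
  have hprodR : ∏ w : InfinitePlace K, ((f w : ℝ)) = Real.sqrt c := by
    simp_rw [hfcoe]
    have hnn : ∀ w : InfinitePlace K, w ∈ (Finset.univ : Finset (InfinitePlace K)) → (0:ℝ) ≤ w (γ : K) * s := fun w _ =>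
      le_of_lt (mul_pos (hwγ w) hspos)
    calc ∏ w : InfinitePlace K, Real.sqrt (w (γ : K) * s)
        = ∏ w : InfinitePlace K, (w (γ : K) * s) ^ ((1/2 : ℝ)) :=
          Finset.prod_congr rfl fun w _ => Real.sqrt_eq_rpow _
      _ = (∏ w : InfinitePlace K, (w (γ : K) * s)) ^ ((1/2 : ℝ)) :=
          Real.finset_prod_rpow _ _ hnn _
      _ = c ^ ((1/2 : ℝ)) := by
          rw [Finset.prod_mul_distrib, Finset.prod_const, hprodγ, Finset.card_univ, hcard, hsn,
            mul_div_cancel₀ _ (ne_of_gt hNpos)]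
      _ = Real.sqrt c := (Real.sqrt_eq_rpow _).symm
  have hdnorm : ((‖(NumberField.discr K)‖₊ : ℝ)) = D := by
    rw [coe_nnnorm, Int.norm_eq_abs, ← abs_of_nonneg hD, hD_def]
  -- the volume inequality
  have hkey : NNReal.sqrt ‖(NumberField.discr K)‖₊ < ∏ w : InfinitePlace K, f w ^ w.mult := by
    rw [← NNReal.coe_lt_coe, NNReal.coe_prod, Real.coe_sqrt, hdnorm]
    simp_rw [hmult, pow_one, hprodR]
    exact Real.sqrt_lt_sqrt hD hc1
  have hvol : NumberField.mixedEmbedding.minkowskiBound K ↑1 <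
      MeasureTheory.volume (NumberField.mixedEmbedding.convexBodyLT K f) := by
    rw [NumberField.mixedEmbedding.convexBodyLT_volume,
      NumberField.mixedEmbedding.minkowskiBound,
      NumberField.mixedEmbedding.volume_fundamentalDomain_fractionalIdealLatticeBasis,
      NumberField.mixedEmbedding.volume_fundamentalDomain_latticeBasis,
      NumberField.mixedEmbedding.finrank, Units.val_one, FractionalIdeal.absNorm_one,
      Rat.cast_one, ENNReal.ofReal_one, one_mul, hr2, pow_zero, one_mul,
      NumberField.mixedEmbedding.convexBodyLTFactor, hr1, hr2, pow_zero, mul_one]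
    calc (NNReal.sqrt ‖(NumberField.discr K)‖₊ : ℝ≥0∞) * (2:ℝ≥0∞) ^ n
        = ((NNReal.sqrt ‖(NumberField.discr K)‖₊ * 2 ^ n : ℝ≥0) : ℝ≥0∞) := by
          push_cast; ring
      _ < (((2:ℝ≥0) ^ n * ∏ w : InfinitePlace K, f w ^ w.mult : ℝ≥0) : ℝ≥0∞) := by
          rw [ENNReal.coe_lt_coe, mul_comm ((2:ℝ≥0)^n) _]
          exact mul_lt_mul_of_pos_right hkey (pow_pos (by norm_num : (0:ℝ≥0) < 2) n)
      _ = _ := by push_cast; ring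
  obtain ⟨a, ha0, ha⟩ := NumberField.mixedEmbedding.exists_ne_zero_mem_ringOfIntegers_lt K hvol
  refine ⟨a, ha0, fun σ => ?_⟩
  set φ : K →+* ℂ := (Complex.ofRealHom).comp σ with hφ
  set w : InfinitePlace K := NumberField.InfinitePlace.mk φ with hw
  have hwa : w ((a : K)) = |σ ((a : K))| := by
    rw [hw, NumberField.InfinitePlace.apply]
    simp [hφ]
  have hwγ2 : w ((γ : K)) = σ ((γ : K)) := by
    rw [hw, NumberField.InfinitePlace.apply]
    simp [hφ, abs_of_pos (hγ σ)]
  have h := ha w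
  have h' : |σ ((a : K))| < Real.sqrt (σ ((γ : K)) * s) := by
    rw [← hwa, ← hwγ2, ← hfcoe w]
    exact_mod_cast h
  have hγσ : 0 < σ ((γ : K)) := hγ σ
  calc (σ ((a : K)))^2 = |σ ((a : K))|^2 := (sq_abs _).symm
    _ < Real.sqrt (σ ((γ : K)) * s)^2 :=
        pow_lt_pow_left₀ h' (abs_nonneg _) two_ne_zero
    _ = σ ((γ : K)) * s := Real.sq_sqrt (le_of_lt (mul_pos hγσ hspos))
    _ < σ ((γ : K)) := by nlinarith

variable {K : Type} [Field K] [NumberField K]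

lemma UFC.intTrace_cast (x : 𝓞 K) :
    ((Algebra.intTrace ℤ (𝓞 K) x : ℤ) : ℚ) = Algebra.trace ℚ K (x : K) :=
  Algebra.algebraMap_intTrace (A := ℤ) (K := ℚ) (L := K) (B := 𝓞 K) x

lemma UFC.intTrace_pos (hK : IsTotallyRealField K) {x : 𝓞 K}
    (hx : TotallyPositive (x : K)) : 0 < Algebra.intTrace ℤ (𝓞 K) x := by
  have h := UFC.trace_pos hK hx
  rw [← UFC.intTrace_cast] at h
  exact_mod_cast h

lemma UFC.sq_totPos {x : 𝓞 K} (hx : x ≠ 0) : TotallyPositive ((x^2 : 𝓞 K) : K) := by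
  intro σ
  have h1 : ((x : K)) ≠ 0 := by
    simpa using hx
  have h2 : σ ((x : K)) ≠ 0 := (map_ne_zero σ).2 h1
  have : ((x^2 : 𝓞 K) : K) = ((x : K))^2 := by push_cast; ring
  rw [this, map_pow]
  exact (sq_nonneg _).lt_of_ne' (pow_ne_zero 2 h2)

lemma UFC.descent (hK : IsTotallyRealField K) :
    ∀ m : ℕ, ∀ γ : 𝓞 K, TotallyPositive (γ : K) →
    (Algebra.intTrace ℤ (𝓞 K) γ).toNat ≤ m →
    ∃ α q : 𝓞 K, TotallyPositive ((α : K)) ∧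
      Algebra.norm ℚ (α : K) ≤ (NumberField.discr K : ℚ) ∧
      (∃ (t : ℕ) (β : Fin t → 𝓞 K), q = ∑ i, β i ^ 2) ∧ γ = α + q := by
  intro m
  induction m with
  | zero =>
    intro γ hγ hle
    exfalso
    have := UFC.intTrace_pos hK hγ
    omega
  | succ m ih =>
    intro γ hγ hle
    rcases le_or_gt (Algebra.norm ℚ (γ : K)) ((NumberField.discr K : ℚ)) with h | h
    · exact ⟨γ, 0, hγ, h, ⟨0, fun _ => 0, by simp⟩, by ring⟩
    · obtain ⟨x, hx0, hx⟩ := UFC.exists_small_sq hK hγ h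
      have hγ' : TotallyPositive ((γ - x^2 : 𝓞 K) : K) := by
        intro σ
        have h1 := hx σ
        have h2 : ((γ - x^2 : 𝓞 K) : K) = (γ : K) - ((x : K))^2 := by push_cast; ring
        rw [h2, map_sub, map_pow]
        linarith
      have htr : (Algebra.intTrace ℤ (𝓞 K) (γ - x^2)).toNat ≤ m := by
        have e1 : Algebra.intTrace ℤ (𝓞 K) (γ - x^2) =
            Algebra.intTrace ℤ (𝓞 K) γ - Algebra.intTrace ℤ (𝓞 K) (x^2) := map_sub _ _ _
        have e2 := UFC.intTrace_pos hK (UFC.sq_totPos hx0)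
        have e3 := UFC.intTrace_pos hK hγ'
        omega
      obtain ⟨α, q, hα, hnorm, ⟨t, β, hβ⟩, hsum⟩ := ih (γ - x^2) hγ' htr
      refine ⟨α, q + x^2, hα, hnorm, ⟨t+1, Fin.snoc β x, ?_⟩, by
        have : γ - x^2 = α + q := hsum
        linear_combination this⟩
      rw [Fin.sum_univ_castSucc]
      simp [hβ]

end mink

/-- If `P(𝓞 K) ≤ P` and `S` is a set of totally positive integers containing, up to
multiplication by squares of units, every totally positive integer of norm at most `Δ`,
then the diagonal form `∑_{s ∈ S} s x_s² + y₁² + ⋯ + y_P²` represents every element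
of `𝓞 K⁺`. -/
theorem universal_form_construction (K : Type) [Field K] [NumberField K]
    (hK : IsTotallyRealField K)
    (P : ℕ) (hPpos : 0 < P)
    (hPyth : ∀ x : 𝓞 K, (∃ (t : ℕ) (β : Fin t → 𝓞 K), x = ∑ i, β i ^ 2) →
      ∃ y : Fin P → 𝓞 K, x = ∑ i, y i ^ 2)
    (S : Set (𝓞 K)) (hS : ∀ s ∈ S, TotallyPositive ((s : 𝓞 K) : K))
    (hSrep : ∀ α : 𝓞 K, TotallyPositive (α : K) →
      Algebra.norm ℚ (α : K) ≤ (NumberField.discr K : ℚ) →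
      ∃ s ∈ S, ∃ u : (𝓞 K)ˣ, α = s * (u : 𝓞 K) ^ 2) :
    ∀ γ : 𝓞 K, TotallyPositive (γ : K) →
      ∃ s ∈ S, ∃ (x : 𝓞 K) (y : Fin P → 𝓞 K), γ = s * x ^ 2 + ∑ i, y i ^ 2 := by
  intro γ hγ
  obtain ⟨α, q, hα, hnorm, hsos, hsum⟩ := UFC.descent hK _ γ hγ le_rfl
  obtain ⟨s, hsS, u, hu⟩ := hSrep α hα hnorm
  obtain ⟨y, hy⟩ := hPyth q hsos
  exact ⟨s, hsS, (u : 𝓞 K), y, by rw [hsum, hu, hy]⟩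
end

section
/- For every d ≥ 1 there exists a constant C > 0, depending only on d, such that for every number field K of degree d over ℚ and every real number X ≥ 2, the number of nonzero ideals of O_K of absolute norm at most X is at most C·X·(log X)^{d−1}. -/
open NumberField

open scoped Classical in
/-- tuples of positive naturals with product at most `X` -/
private abbrev Tup (d : ℕ) (X : ℝ) : Type :=
  {v : Fin d → ℕ // (∀ i, 1 ≤ v i) ∧ ((∏ i, v i : ℕ) : ℝ) ≤ X}

private lemma tup_entry_le {d : ℕ} {X : ℝ} (v : Tup d X) (i : Fin d) : v.1 i ≤ ⌊X⌋₊ := by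
  refine Nat.le_floor ?_
  calc ((v.1 i : ℝ)) ≤ ((∏ j, v.1 j : ℕ) : ℝ) := by
        exact_mod_cast Finset.single_le_prod' (fun j _ => v.2.1 j) (Finset.mem_univ i)
    _ ≤ X := v.2.2

private lemma tup_finite (d : ℕ) (X : ℝ) : Finite (Tup d X) := by
  have h : Function.Injective (fun v : Tup d X =>
      (fun i => (⟨v.1 i, Nat.lt_succ_of_le (tup_entry_le v i)⟩ : Fin (⌊X⌋₊ + 1)))) := by
    intro u v huv
    apply Subtype.ext; funext i
    exact congrArg Fin.val (congrFun huv i)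
  exact Finite.of_injective _ h

private lemma nat_card_sigma {ι : Type*} [Fintype ι] (f : ι → Type*) [∀ i, Finite (f i)] :
    Nat.card (Σ i, f i) = ∑ i, Nat.card (f i) := by
  letI : ∀ i, Fintype (f i) := fun i => Fintype.ofFinite (f i)
  simp [Nat.card_eq_fintype_card]

private lemma sum_inv_le (N : ℕ) (X : ℝ) (hX : 1 ≤ X) (hN : (N : ℝ) ≤ X) :
    ∑ m ∈ Finset.Icc 1 N, (m : ℝ)⁻¹ ≤ 1 + Real.log X := by
  have hlogX : 0 ≤ Real.log X := Real.log_nonneg hX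
  rcases Nat.eq_zero_or_pos N with rfl | hN0
  · simp; linarith
  have h1 : ∑ m ∈ Finset.Icc 1 N, (m : ℝ)⁻¹ = ((harmonic N : ℚ) : ℝ) := by
    rw [harmonic_eq_sum_Icc]; push_cast; rfl
  have h2 := harmonic_le_one_add_log N
  have h3 : Real.log N ≤ Real.log X :=
    Real.log_le_log (by exact_mod_cast hN0) hN
  rw [h1]; linarith

private lemma tup_card_le : ∀ (e : ℕ) (X : ℝ), 1 ≤ X →
    (Nat.card (Tup (e + 1) X) : ℝ) ≤ X * (1 + Real.log X) ^ e := by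
  intro e
  induction e with
  | zero =>
    intro X hX
    have h : Function.Injective (fun v : Tup 1 X =>
        (⟨v.1 0 - 1, by have h1 := v.2.1 0; have h2 := tup_entry_le v 0; omega⟩ : Fin ⌊X⌋₊)) := by
      intro u v huv
      have h1 := u.2.1 0
      have h2 := v.2.1 0
      have h3 : u.1 0 - 1 = v.1 0 - 1 := congrArg Fin.val huv
      apply Subtype.ext; funext i
      have : i = 0 := Subsingleton.elim _ _
      subst this; omega
    have := Nat.card_le_card_of_injective _ h
    rw [Nat.card_eq_fintype_card (α := Fin ⌊X⌋₊), Fintype.card_fin] at this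
    calc (Nat.card (Tup 1 X) : ℝ) ≤ (⌊X⌋₊ : ℝ) := by exact_mod_cast this
      _ ≤ X := Nat.floor_le (by linarith)
      _ = X * (1 + Real.log X) ^ 0 := by ring
  | succ e ih =>
    intro X hX
    have hX0 : (0:ℝ) < X := by linarith
    set N := ⌊X⌋₊ with hN
    haveI : ∀ m : {x // x ∈ Finset.Icc 1 N}, Finite (Tup (e+1) (X / ((m : ℕ) : ℝ))) :=
      fun m => tup_finite _ _
    -- a surjection from the sigma type
    have hcons : ∀ m : ℕ, m ∈ Finset.Icc 1 N → ∀ w : Fin (e+1) → ℕ, (∀ i, 1 ≤ w i) →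
        ((∏ i, w i : ℕ) : ℝ) ≤ X / (m : ℝ) →
        (∀ i, 1 ≤ (Fin.cons m w : Fin (e+2) → ℕ) i) ∧ ((∏ i, (Fin.cons m w : Fin (e+2) → ℕ) i : ℕ) : ℝ) ≤ X := by
      intro m hm w hw hwX
      have hm1 : 1 ≤ m := (Finset.mem_Icc.mp hm).1
      have hm0 : (0:ℝ) < (m : ℝ) := by exact_mod_cast hm1
      constructor
      · intro i
        rcases Fin.eq_zero_or_eq_succ i with rfl | ⟨j, rfl⟩
        · simpa using hm1
        · simpa using hw j
      · have hprod : (∏ i, (Fin.cons m w : Fin (e+2) → ℕ) i : ℕ) = m * ∏ i, w i := by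
          rw [Fin.prod_univ_succ]; simp
        rw [hprod]
        push_cast at hwX ⊢
        calc (m : ℝ) * (∏ i, (w i : ℝ)) ≤ (m : ℝ) * (X / (m : ℝ)) :=
              mul_le_mul_of_nonneg_left hwX (by positivity)
          _ = X := by field_simp
    have hsurj : Function.Surjective
        (fun x : Σ m : {x // x ∈ Finset.Icc 1 N}, Tup (e+1) (X / ((m : ℕ) : ℝ)) =>
          (⟨(Fin.cons (x.1 : ℕ) x.2.1 : Fin (e+2) → ℕ),
            hcons x.1 x.1.2 x.2.1 x.2.2.1 x.2.2.2⟩ : Tup (e+2) X)) := by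
      intro v
      have h1 : 1 ≤ v.1 0 := v.2.1 0
      have hm0 : (0:ℝ) < ((v.1 0 : ℕ) : ℝ) := by exact_mod_cast h1
      have hmem : v.1 0 ∈ Finset.Icc 1 N := by
        rw [Finset.mem_Icc]
        exact ⟨h1, Nat.le_floor (le_trans (by
          exact_mod_cast Finset.single_le_prod' (fun j _ => v.2.1 j) (Finset.mem_univ 0)) v.2.2)⟩
      have htail : ((∏ i, Fin.tail v.1 i : ℕ) : ℝ) ≤ X / ((v.1 0 : ℕ) : ℝ) := by
        rw [le_div_iff₀ hm0]
        have heq : (∏ i, v.1 i : ℕ) = v.1 0 * ∏ i, Fin.tail v.1 i := Fin.prod_univ_succ v.1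
        calc ((∏ i, Fin.tail v.1 i : ℕ) : ℝ) * ((v.1 0 : ℕ) : ℝ)
            = ((∏ i, v.1 i : ℕ) : ℝ) := by rw [heq]; push_cast; ring
          _ ≤ X := v.2.2
      refine ⟨⟨⟨v.1 0, hmem⟩, ⟨Fin.tail v.1, fun i => v.2.1 i.succ, htail⟩⟩, ?_⟩
      apply Subtype.ext
      exact Fin.cons_self_tail v.1
    haveI : Finite (Σ m : {x // x ∈ Finset.Icc 1 N}, Tup (e+1) (X / ((m : ℕ) : ℝ))) := by
      infer_instance
    have hcard := Nat.card_le_card_of_surjective _ hsurj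
    rw [nat_card_sigma] at hcard
    have key : ((∑ m : {x // x ∈ Finset.Icc 1 N}, Nat.card (Tup (e+1) (X / ((m : ℕ) : ℝ)))) : ℝ)
        ≤ X * (1 + Real.log X) ^ (e + 1) := by
      have hterm : ∀ m : {x // x ∈ Finset.Icc 1 N},
          (Nat.card (Tup (e+1) (X / ((m : ℕ) : ℝ))) : ℝ)
            ≤ X * (1 + Real.log X) ^ e * ((m : ℕ) : ℝ)⁻¹ := by
        intro m
        obtain ⟨hm1, hmN⟩ := Finset.mem_Icc.mp m.2
        have hm0 : (0:ℝ) < ((m : ℕ) : ℝ) := by exact_mod_cast hm1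
        have hmX : ((m : ℕ) : ℝ) ≤ X := le_trans (by exact_mod_cast hmN) (Nat.floor_le hX0.le)
        have hdiv1 : 1 ≤ X / ((m : ℕ) : ℝ) := (one_le_div hm0).mpr hmX
        have h5 := ih (X / ((m : ℕ) : ℝ)) hdiv1
        have h6 : (1 + Real.log (X / ((m : ℕ) : ℝ))) ^ e ≤ (1 + Real.log X) ^ e := by
          apply pow_le_pow_left₀ (by linarith [Real.log_nonneg hdiv1])
          have : Real.log (X / ((m : ℕ) : ℝ)) ≤ Real.log X :=
            Real.log_le_log (by positivity) (div_le_self hX0.le (by exact_mod_cast hm1))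
          linarith
        calc (Nat.card (Tup (e+1) (X / ((m : ℕ) : ℝ))) : ℝ)
            ≤ (X / ((m : ℕ) : ℝ)) * (1 + Real.log (X / ((m : ℕ) : ℝ))) ^ e := h5
          _ ≤ (X / ((m : ℕ) : ℝ)) * (1 + Real.log X) ^ e := by
              apply mul_le_mul_of_nonneg_left h6 (by positivity)
          _ = X * (1 + Real.log X) ^ e * ((m : ℕ) : ℝ)⁻¹ := by ring
      calc ∑ m : {x // x ∈ Finset.Icc 1 N}, (Nat.card (Tup (e+1) (X / ((m : ℕ) : ℝ))) : ℝ)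
          ≤ ∑ m : {x // x ∈ Finset.Icc 1 N}, X * (1 + Real.log X) ^ e * ((m : ℕ) : ℝ)⁻¹ :=
            Finset.sum_le_sum (fun m _ => hterm m)
        _ = X * (1 + Real.log X) ^ e * ∑ m ∈ Finset.Icc 1 N, ((m : ℕ) : ℝ)⁻¹ := by
            rw [← Finset.mul_sum]
            congr 1
            exact Finset.sum_coe_sort (Finset.Icc 1 N) (fun m => ((m:ℕ):ℝ)⁻¹)
        _ ≤ X * (1 + Real.log X) ^ e * (1 + Real.log X) := by
            have hnn : (0:ℝ) ≤ X * (1 + Real.log X) ^ e := by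
              have := Real.log_nonneg hX
              have : (0:ℝ) ≤ (1 + Real.log X) ^ e := by positivity
              positivity
            exact mul_le_mul_of_nonneg_left (sum_inv_le N X hX (Nat.floor_le hX0.le)) hnn
        _ = X * (1 + Real.log X) ^ (e + 1) := by ring
    calc (Nat.card (Tup (e + 1 + 1) X) : ℝ)
        ≤ ((∑ m : {x // x ∈ Finset.Icc 1 N}, Nat.card (Tup (e+1) (X / ((m : ℕ) : ℝ)))) : ℝ) := by
          exact_mod_cast hcard
      _ ≤ X * (1 + Real.log X) ^ (e + 1) := key

open Ideal UniqueFactorizationMonoid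

variable {K : Type} [Field K] [NumberField K]

private lemma norm_span_natCast (q : ℕ) :
    Ideal.absNorm (Ideal.span {(q : 𝓞 K)}) = q ^ Module.finrank ℤ (𝓞 K) := by
  rw [Ideal.absNorm_span_singleton]
  have h : ((q : 𝓞 K)) = algebraMap ℤ (𝓞 K) (q : ℤ) := by
    simp
  rw [h, Algebra.norm_algebraMap_of_basis (RingOfIntegers.basis K),
    ← Module.finrank_eq_card_chooseBasisIndex]
  rw [← Nat.cast_pow, Int.natAbs_natCast]

private lemma absNorm_dvd_pow {P : Ideal (𝓞 K)} {q : ℕ} (hq : (q : 𝓞 K) ∈ P) :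
    Ideal.absNorm P ∣ q ^ Module.finrank ℤ (𝓞 K) := by
  have h : Ideal.span {(q : 𝓞 K)} ≤ P := (Ideal.span_singleton_le_iff_mem _).mpr hq
  have := Ideal.absNorm_dvd_absNorm_of_le h
  rwa [norm_span_natCast] at this

private lemma exists_char {P : Ideal (𝓞 K)} (hP : P.IsPrime) (h0 : P ≠ ⊥) :
    ∃ q : ℕ, q.Prime ∧ (q : 𝓞 K) ∈ P ∧ (Ideal.absNorm P).minFac = q ∧
      Ideal.absNorm P ∣ q ^ Module.finrank ℤ (𝓞 K) ∧ q ≤ Ideal.absNorm P := by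
  have hN0 : Ideal.absNorm P ≠ 0 := by
    rw [Ne, Ideal.absNorm_eq_zero_iff]; exact h0
  have hN1 : Ideal.absNorm P ≠ 1 := by
    rw [Ne, Ideal.absNorm_eq_one_iff]; exact hP.ne_top
  set c : Ideal ℤ := P.comap (algebraMap ℤ (𝓞 K)) with hc
  haveI : c.IsPrime := Ideal.IsPrime.comap _
  have hmem : ((Ideal.absNorm P : ℤ)) ∈ c := by
    rw [hc, Ideal.mem_comap, algebraMap_int_eq]
    simpa using Ideal.absNorm_mem P
  have hc0 : c ≠ ⊥ := by
    intro h
    rw [h, Ideal.mem_bot] at hmem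
    exact hN0 (by exact_mod_cast hmem)
  obtain ⟨g, hg⟩ := (IsPrincipalIdealRing.principal c).principal
  have hg0 : g ≠ 0 := by
    rintro rfl
    exact hc0 (hg.trans (Ideal.span_singleton_eq_bot.mpr rfl))
  have hcp : c.IsPrime := inferInstance
  rw [hg] at hcp
  have hgp : Prime g := (Ideal.span_singleton_prime hg0).mp hcp
  have hqprime : g.natAbs.Prime := Int.prime_iff_natAbs_prime.mp hgp
  have hgP : algebraMap ℤ (𝓞 K) g ∈ P := by
    have hgc : g ∈ c := hg ▸ Ideal.mem_span_singleton_self g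
    exact (Ideal.mem_comap).mp hgc
  have hmemP : ((g.natAbs : ℕ) : 𝓞 K) ∈ P := by
    have hcast : ((g.natAbs : ℕ) : 𝓞 K) = algebraMap ℤ (𝓞 K) ((g.natAbs : ℕ) : ℤ) := by
      simp only [algebraMap_int_eq, eq_intCast, Int.cast_natCast]
    rw [hcast]
    rcases Int.natAbs_eq g with h | h
    · rw [← h]; exact hgP
    · have : ((g.natAbs : ℕ) : ℤ) = -g := by omega
      rw [this, map_neg]
      exact neg_mem hgP
  have hdvd : Ideal.absNorm P ∣ g.natAbs ^ Module.finrank ℤ (𝓞 K) := absNorm_dvd_pow hmemP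
  obtain ⟨j, hjle, hNP⟩ := (Nat.dvd_prime_pow hqprime).mp hdvd
  have hj0 : j ≠ 0 := by
    rintro rfl
    exact hN1 (by simpa using hNP)
  refine ⟨g.natAbs, hqprime, hmemP, ?_, hdvd, ?_⟩
  · rw [hNP, Nat.Prime.pow_minFac hqprime hj0]
  · rw [hNP]
    exact Nat.le_self_pow hj0 _


open scoped Classical

private lemma exists_idx (d : ℕ) (hd : Module.finrank ℤ (𝓞 K) = d) (hd1 : 1 ≤ d) :
    ∃ idx : Ideal (𝓞 K) → Fin d,
      ∀ P Q : Ideal (𝓞 K), P.IsPrime → P ≠ ⊥ → Q.IsPrime → Q ≠ ⊥ →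
        (Ideal.absNorm P).minFac = (Ideal.absNorm Q).minFac → idx P = idx Q → P = Q := by
  have main : ∀ p : ℕ, ∃ f : Ideal (𝓞 K) → Fin d,
      Set.InjOn f {P : Ideal (𝓞 K) | P.IsPrime ∧ P ≠ ⊥ ∧ (Ideal.absNorm P).minFac = p} := by
    intro p
    set S := {P : Ideal (𝓞 K) | P.IsPrime ∧ P ≠ ⊥ ∧ (Ideal.absNorm P).minFac = p} with hS
    by_cases hSne : S.Nonempty
    · obtain ⟨P₀, hP₀⟩ := hSne
      obtain ⟨q₀, hq₀p, _, hq₀min, _, _⟩ := exists_char hP₀.1 hP₀.2.1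
      have hp : p.Prime := by rw [← hP₀.2.2, hq₀min]; exact hq₀p
      have hsub : S ⊆ {I : Ideal (𝓞 K) | Ideal.absNorm I ≤ p ^ d} := by
        intro P hP
        obtain ⟨q, hqp, hqmem, hqmin, hqdvd, _⟩ := exists_char hP.1 hP.2.1
        have hq : q = p := by rw [← hP.2.2, hqmin]
        rw [hq, hd] at hqdvd
        exact Set.mem_setOf.mpr (Nat.le_of_dvd (pow_pos hp.pos d) hqdvd)
      have hfin : S.Finite := (Ideal.finite_setOf_absNorm_le (p ^ d)).subset hsub
      haveI := hfin.fintype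
      set s : Finset (Ideal (𝓞 K)) := hfin.toFinset with hs
      have hmem' : ∀ P ∈ s, P ∈ S := fun P hP => hfin.mem_toFinset.mp hP
      have h1 : ∀ P ∈ s, Prime P := fun P hP =>
        Ideal.prime_of_isPrime (hmem' P hP).2.1 (hmem' P hP).1
      have hdvds : ∀ P ∈ s, P ∣ Ideal.span {(p : 𝓞 K)} := by
        intro P hP
        obtain ⟨q, hqp, hqmem, hqmin, _, _⟩ := exists_char (hmem' P hP).1 (hmem' P hP).2.1
        have hq : q = p := by rw [← (hmem' P hP).2.2, hqmin]
        rw [Ideal.dvd_iff_le, Ideal.span_singleton_le_iff_mem, ← hq]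
        exact hqmem
      have hprod := Finset.prod_primes_dvd (Ideal.span {(p : 𝓞 K)}) h1 hdvds
      have hnorm : ∏ P ∈ s, Ideal.absNorm P ∣ p ^ d := by
        have h2 := map_dvd Ideal.absNorm hprod
        rwa [map_prod, norm_span_natCast, hd] at h2
      have hge : p ^ s.card ≤ ∏ P ∈ s, Ideal.absNorm P := by
        rw [← Finset.prod_const]
        refine Finset.prod_le_prod' ?_
        intro P hP
        obtain ⟨q, hqp, _, hqmin, _, hqle⟩ := exists_char (hmem' P hP).1 (hmem' P hP).2.1
        have hq : q = p := by rw [← (hmem' P hP).2.2, hqmin]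
        rw [← hq]
        exact hqle
      have hcard : s.card ≤ d := by
        have h3 : p ^ s.card ≤ p ^ d := hge.trans (Nat.le_of_dvd (pow_pos hp.pos d) hnorm)
        exact (Nat.pow_le_pow_iff_right hp.one_lt).mp h3
      have hcards : Fintype.card S ≤ d := by
        rw [← Set.Finite.card_toFinset hfin]
        exact hcard
      obtain ⟨emb⟩ := Function.Embedding.nonempty_of_card_le
        (α := ↥S) (β := Fin d) (by simpa using hcards)
      refine ⟨fun P => if h : P ∈ S then emb ⟨P, h⟩ else ⟨0, hd1⟩, ?_⟩
      intro P hP Q hQ h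
      simp only [dif_pos hP, dif_pos hQ] at h
      exact congrArg Subtype.val (emb.injective h)
    · exact ⟨fun _ => ⟨0, hd1⟩, fun P hP => absurd (Set.nonempty_of_mem hP) hSne⟩
  choose F hF using main
  refine ⟨fun P => F ((Ideal.absNorm P).minFac) P, ?_⟩
  intro P Q hPp hP0 hQp hQ0 hpq hidx
  refine hF ((Ideal.absNorm P).minFac) ⟨hPp, hP0, rfl⟩ ⟨hQp, hQ0, hpq.symm⟩ ?_
  show F ((Ideal.absNorm P).minFac) P = F ((Ideal.absNorm P).minFac) Q
  conv_rhs => rw [hpq]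
  exact hidx

private lemma exists_phi (d : ℕ) (hd : Module.finrank ℤ (𝓞 K) = d) (hd1 : 1 ≤ d) :
    ∃ Φ : Ideal (𝓞 K) → (Fin d → ℕ),
      (∀ I, I ≠ ⊥ → ∏ i, Φ I i = Ideal.absNorm I) ∧
      (∀ I i, 1 ≤ Φ I i) ∧
      (∀ I J, I ≠ ⊥ → J ≠ ⊥ → Φ I = Φ J → I = J) := by
  obtain ⟨idx, hidx⟩ := exists_idx d hd hd1
  set nf := fun I : Ideal (𝓞 K) => normalizedFactors I with hnf
  have hfac : ∀ I : Ideal (𝓞 K), ∀ P ∈ (nf I).toFinset, Prime P := fun I P hP =>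
    prime_of_normalized_factor P (Multiset.mem_toFinset.mp hP)
  refine ⟨fun I i => ∏ P ∈ (nf I).toFinset.filter (fun P => idx P = i),
      Ideal.absNorm P ^ (nf I).count P, ?_, ?_, ?_⟩
  · -- product over coordinates gives the norm
    intro I hI
    rw [Finset.prod_fiberwise_of_maps_to (fun P _ => Finset.mem_univ (idx P))
      (fun P => Ideal.absNorm P ^ (nf I).count P)]
    have h1 : ∏ P ∈ (nf I).toFinset, Ideal.absNorm P ^ (nf I).count P
        = Ideal.absNorm ((nf I).toFinset.prod fun P => P ^ (nf I).count P) := by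
      rw [map_prod]
      exact Finset.prod_congr rfl fun P _ => (map_pow Ideal.absNorm P _).symm
    rw [h1, ← Finset.prod_multiset_count, associated_iff_eq.mp (prod_normalizedFactors hI)]
  · -- positivity
    intro I i
    refine Nat.one_le_iff_ne_zero.mpr (Finset.prod_ne_zero_iff.mpr ?_)
    intro P hP
    have hprime := hfac I P (Finset.mem_filter.mp hP).1
    exact pow_ne_zero _ (fun h => hprime.ne_zero (Ideal.absNorm_eq_zero_iff.mp h))
  · -- injectivity
    intro I J hI hJ h
    have count_eq : ∀ P : Ideal (𝓞 K), (nf I).count P = (nf J).count P := by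
      intro P
      by_cases hP : Prime P
      case neg =>
        rw [Multiset.count_eq_zero_of_notMem (fun h' => hP (prime_of_normalized_factor P h')),
          Multiset.count_eq_zero_of_notMem (fun h' => hP (prime_of_normalized_factor P h'))]
      case pos =>
        have hP0 : P ≠ ⊥ := hP.ne_zero
        have hPp : P.IsPrime := Ideal.isPrime_of_prime hP
        obtain ⟨q, hq, hqmem, hqmin, hqdvd, hqle⟩ := exists_char hPp hP0
        obtain ⟨j, hjle, hNP⟩ := (Nat.dvd_prime_pow hq).mp hqdvd
        have hj0 : j ≠ 0 := by
          rintro rfl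
          rw [pow_zero, Ideal.absNorm_eq_one_iff] at hNP
          exact hPp.ne_top hNP
        have key : ∀ L : Ideal (𝓞 K), L ≠ ⊥ →
            (∏ Q ∈ (nf L).toFinset.filter (fun Q => idx Q = idx P),
              Ideal.absNorm Q ^ (nf L).count Q).factorization q = (nf L).count P * j := by
          intro L hL
          rw [Nat.factorization_prod (fun Q hQ => pow_ne_zero _
            (fun h0 => (hfac L Q (Finset.mem_filter.mp hQ).1).ne_zero
              (Ideal.absNorm_eq_zero_iff.mp h0)))]
          rw [Finsupp.finset_sum_apply]
          rw [Finset.sum_eq_single P]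
          · rw [Nat.factorization_pow, Finsupp.smul_apply, hNP, hq.factorization_pow,
              Finsupp.single_eq_same, smul_eq_mul]
          · intro Q hQmem hQP
            obtain ⟨hQfin, hQidx⟩ := Finset.mem_filter.mp hQmem
            have hQprime := hfac L Q hQfin
            have hQ0 : Q ≠ ⊥ := hQprime.ne_zero
            have hQp : Q.IsPrime := Ideal.isPrime_of_prime hQprime
            obtain ⟨q', hq', _, hq'min, hq'dvd, _⟩ := exists_char hQp hQ0
            obtain ⟨j', _, hNQ⟩ := (Nat.dvd_prime_pow hq').mp hq'dvd
            have hqq' : q' ≠ q := by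
              intro hcontra
              apply hQP
              exact hidx Q P hQp hQ0 hPp hP0 (by rw [hq'min, hqmin, hcontra]) hQidx
            rw [Nat.factorization_pow, Finsupp.smul_apply, hNQ, hq'.factorization_pow,
              Finsupp.single_apply, if_neg hqq', smul_eq_mul, mul_zero]
          · intro hPnot
            have : (nf L).count P = 0 := by
              rw [Multiset.count_eq_zero]
              intro hmem
              exact hPnot (Finset.mem_filter.mpr ⟨Multiset.mem_toFinset.mpr hmem, rfl⟩)
            rw [this, pow_zero, Nat.factorization_one, Finsupp.coe_zero, Pi.zero_apply]
        have h1 := key I hI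
        have h2 := key J hJ
        have hIJ : (∏ Q ∈ (nf I).toFinset.filter (fun Q => idx Q = idx P),
              Ideal.absNorm Q ^ (nf I).count Q)
            = ∏ Q ∈ (nf J).toFinset.filter (fun Q => idx Q = idx P),
              Ideal.absNorm Q ^ (nf J).count Q := congrFun h (idx P)
        rw [hIJ, h2] at h1
        exact Nat.eq_of_mul_eq_mul_right (Nat.pos_of_ne_zero hj0) h1.symm
    have hnfeq : nf I = nf J := Multiset.ext.mpr count_eq
    calc I = (nf I).prod := (associated_iff_eq.mp (prod_normalizedFactors hI)).symm
      _ = (nf J).prod := by rw [hnfeq]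
      _ = J := associated_iff_eq.mp (prod_normalizedFactors hJ)


/-- For every degree `d ≥ 1` there is a constant `C > 0` such that every number field of
degree `d` has at most `C · X · (log X)^(d-1)` nonzero ideals of absolute norm at most `X`. -/
theorem ideal_count_bound (d : ℕ) (hd : 1 ≤ d) :
    ∃ C : ℝ, 0 < C ∧
      ∀ (K : Type) [Field K] [NumberField K], Module.finrank ℚ K = d →
        ∀ X : ℝ, 2 ≤ X →
          (Nat.card {I : Ideal (𝓞 K) // I ≠ ⊥ ∧ (Ideal.absNorm I : ℝ) ≤ X} : ℝ) ≤
            C * X * Real.log X ^ (d - 1) := by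
  obtain ⟨e, rfl⟩ : ∃ e, d = e + 1 := ⟨d - 1, (Nat.succ_pred_eq_of_pos hd).symm⟩
  have hlog2 : 0 < Real.log 2 := Real.log_pos one_lt_two
  set c : ℝ := 1 + (Real.log 2)⁻¹ with hc
  have hc0 : 0 < c := by positivity
  refine ⟨c ^ e, pow_pos hc0 e, ?_⟩
  intro K _ _ hK X hX
  simp only [Nat.add_sub_cancel]
  have hd' : Module.finrank ℤ (𝓞 K) = e + 1 := by
    rw [NumberField.RingOfIntegers.rank, hK]
  obtain ⟨Φ, hΦprod, hΦpos, hΦinj⟩ := exists_phi (e + 1) hd' (by omega)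
  have hX1 : (1:ℝ) ≤ X := by linarith
  have hX0 : (0:ℝ) < X := by linarith
  haveI : Finite (Tup (e+1) X) := tup_finite _ _
  have hcard : Nat.card {I : Ideal (𝓞 K) // I ≠ ⊥ ∧ (Ideal.absNorm I : ℝ) ≤ X}
      ≤ Nat.card (Tup (e+1) X) := by
    refine Nat.card_le_card_of_injective
      (fun I => (⟨Φ I.1, fun i => hΦpos I.1 i, by
        rw [hΦprod I.1 I.2.1]; exact I.2.2⟩ : Tup (e+1) X)) ?_
    intro I J hIJ
    apply Subtype.ext
    apply hΦinj _ _ I.2.1 J.2.1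
    exact congrArg Subtype.val hIJ
  have hlogX : 0 ≤ Real.log X := Real.log_nonneg hX1
  have hlog2X : Real.log 2 ≤ Real.log X := Real.log_le_log (by norm_num) hX
  have hcl : 1 + Real.log X ≤ c * Real.log X := by
    have h1 : 1 ≤ (Real.log 2)⁻¹ * Real.log X := by
      rw [inv_mul_eq_div, le_div_iff₀ hlog2]
      linarith
    rw [hc]
    nlinarith
  calc (Nat.card {I : Ideal (𝓞 K) // I ≠ ⊥ ∧ (Ideal.absNorm I : ℝ) ≤ X} : ℝ)
      ≤ (Nat.card (Tup (e+1) X) : ℝ) := by exact_mod_cast hcard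
    _ ≤ X * (1 + Real.log X) ^ e := tup_card_le e X hX1
    _ ≤ X * (c * Real.log X) ^ e := by
        refine mul_le_mul_of_nonneg_left (pow_le_pow_left₀ (by linarith) hcl e) hX0.le
    _ = c ^ e * X * Real.log X ^ e := by rw [mul_pow]; ring
end

section
/- Let K be a number field of degree d over ℚ and let n be a positive integer. Then the number of nonzero ideals of O_K of absolute norm equal to n is at most the number of d-tuples (n₁, …, n_d) of positive integers with n₁·n₂·⋯·n_d = n. -/
open NumberField

open UniqueFactorizationMonoid in
/-- The absolute norm of a nonzero prime ideal of the ring of integers is a positive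
prime power. -/
lemma aux_exists_absNorm_prime {K : Type} [Field K] [NumberField K]
    {P : Ideal (𝓞 K)} (hP : Prime P) :
    ∃ p f : ℕ, p.Prime ∧ 0 < f ∧ Ideal.absNorm P = p ^ f := by
  have hP0 : P ≠ 0 := hP.ne_zero
  have hPb : P ≠ ⊥ := by rw [← Submodule.zero_eq_bot]; exact hP0
  have hprime : P.IsPrime := Ideal.isPrime_of_prime hP
  have hmax : P.IsMaximal := hprime.isMaximal hPb
  letI : Field (𝓞 K ⧸ P) := Ideal.Quotient.field P
  have habs : Ideal.absNorm P ≠ 0 :=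
    Ideal.absNorm_ne_zero_iff_mem_nonZeroDivisors.mpr (mem_nonZeroDivisors_of_ne_zero hP0)
  haveI hfin : Finite (𝓞 K ⧸ P) := (Ideal.absNorm_ne_zero_iff P).mp habs
  cases nonempty_fintype (𝓞 K ⧸ P)
  obtain ⟨p, -, f, hp, hcard⟩ := FiniteField.card' (𝓞 K ⧸ P)
  refine ⟨p, f, hp, f.2, ?_⟩
  rw [Ideal.absNorm_apply, Submodule.cardQuot_apply, Nat.card_eq_fintype_card, hcard]

lemma aux_minFac_pow {p f m : ℕ} (hp : p.Prime) (hf : 0 < f) (hm : m = p ^ f) :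
    m.minFac = p := by
  subst hm
  have h1 : p ^ f ≠ 1 := (Nat.one_lt_pow hf.ne' hp.one_lt).ne'
  have hmf := Nat.minFac_prime h1
  exact (Nat.prime_dvd_prime_iff_eq hmf hp).mp
    (hmf.dvd_of_dvd_pow (Nat.minFac_dvd (p ^ f)))

/-- In a number field of degree `d`, the number of nonzero ideals of absolute norm `n` is
at most the number of `d`-tuples of positive integers with product `n`. -/
theorem ideal_count_le_tuple_count (K : Type) [Field K] [NumberField K]
    (d : ℕ) (hd : Module.finrank ℚ K = d) (n : ℕ) (hn : 0 < n) :
    Nat.card {I : Ideal (𝓞 K) // I ≠ ⊥ ∧ Ideal.absNorm I = n} ≤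
      Nat.card {f : Fin d → ℕ // (∀ i, 0 < f i) ∧ ∏ i, f i = n} := by
  classical
  have hd0 : 0 < d := hd ▸ Module.finrank_pos
  set R := 𝓞 K
  -- target is finite
  haveI : Finite {f : Fin d → ℕ // (∀ i, 0 < f i) ∧ ∏ i, f i = n} := by
    have hlt : ∀ (f : {f : Fin d → ℕ // (∀ i, 0 < f i) ∧ ∏ i, f i = n}) i, f.1 i < n + 1 := by
      intro f i
      have : f.1 i ∣ ∏ j, f.1 j := Finset.dvd_prod_of_mem f.1 (Finset.mem_univ i)
      rw [f.2.2] at this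
      exact Nat.lt_succ_of_le (Nat.le_of_dvd hn this)
    refine Finite.of_injective (fun f i => (⟨f.1 i, hlt f i⟩ : Fin (n + 1))) ?_
    intro f g h
    exact Subtype.ext (funext fun i => congrArg Fin.val (congrFun h i))
  -- the ideal generated by n and its prime factors
  set N : Ideal R := Ideal.span {(n : R)} with hN
  have hn0 : (n : R) ≠ 0 := Nat.cast_ne_zero.mpr hn.ne'
  have hNb : N ≠ 0 := by
    simpa [hN, Submodule.zero_eq_bot, Ideal.span_singleton_eq_bot] using hn0
  set F : Finset (Ideal R) := (UniqueFactorizationMonoid.normalizedFactors N).toFinset with hF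
  have hFprime : ∀ P ∈ F, Prime P := fun P hP =>
    UniqueFactorizationMonoid.prime_of_normalized_factor P (Multiset.mem_toFinset.mp hP)
  -- the residue characteristic and inertia degree
  set pc : Ideal R → ℕ := fun P => (Ideal.absNorm P).minFac with hpc
  set fc : Ideal R → ℕ := fun P => (Ideal.absNorm P).factorization (pc P) with hfc
  have hpf : ∀ P ∈ F, (pc P).Prime ∧ 0 < fc P ∧ Ideal.absNorm P = pc P ^ fc P := by
    intro P hP
    obtain ⟨p, f, hp, hf, heq⟩ := aux_exists_absNorm_prime (hFprime P hP)
    have hm : pc P = p := aux_minFac_pow hp hf heq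
    have hfcv : fc P = f := by
      show (Ideal.absNorm P).factorization (pc P) = f
      rw [heq, hm, Nat.Prime.factorization_pow hp, Finsupp.single_eq_same]
    exact ⟨hm ▸ hp, hfcv ▸ hf, by rw [heq, hm, hfcv]⟩
  have habs_pos : ∀ P ∈ F, 0 < Ideal.absNorm P := by
    intro P hP
    obtain ⟨hp, hf, heq⟩ := hpf P hP
    rw [heq]; exact pow_pos hp.pos _
  -- at most d primes with a given residue characteristic
  have hfiber_card : ∀ p : ℕ, p.Prime → (F.filter (fun Q => pc Q = p)).card ≤ d := by
    intro p hp
    set G := F.filter (fun Q => pc Q = p) with hG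
    have hdvd : ∀ Q ∈ G, Q ∣ Ideal.span {(p : R)} := by
      intro Q hQ
      obtain ⟨hQF, hQp⟩ := Finset.mem_filter.mp hQ
      obtain ⟨hp', hf, heq⟩ := hpf Q hQF
      have hQpr : Q.IsPrime := Ideal.isPrime_of_prime (hFprime Q hQF)
      rw [Ideal.dvd_span_singleton]
      have h1 : ((p : R)) ^ fc Q ∈ Q := by
        have h2 := Ideal.absNorm_mem Q
        rw [heq, hQp] at h2
        push_cast at h2 ⊢
        exact h2
      exact hQpr.mem_of_pow_mem _ h1
    have hprod : (∏ Q ∈ G, Q) ∣ Ideal.span {(p : R)} :=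
      Finset.prod_primes_dvd _ (fun Q hQ => hFprime Q (Finset.mem_filter.mp hQ).1) hdvd
    have hnorm_dvd : Ideal.absNorm (∏ Q ∈ G, Q) ∣ Ideal.absNorm (Ideal.span {(p : R)}) :=
      Ideal.absNorm_dvd_absNorm_of_le (Ideal.le_of_dvd hprod)
    have hnorm_p : Ideal.absNorm (Ideal.span {(p : R)}) = p ^ d := by
      rw [Ideal.absNorm_span_singleton]
      have hcast : ((p : ℕ) : R) = algebraMap ℤ R ((p : ℕ) : ℤ) := by push_cast; rfl
      rw [hcast, Algebra.norm_algebraMap_of_basis (Module.Free.chooseBasis ℤ R)]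
      have hcardd : Fintype.card (Module.Free.ChooseBasisIndex ℤ R) = d := by
        rw [← Module.finrank_eq_card_chooseBasisIndex, NumberField.RingOfIntegers.rank, hd]
      rw [hcardd]
      exact Int.natAbs_pow _ _ ▸ by simp
    have hnorm_prod : p ^ G.card ∣ Ideal.absNorm (∏ Q ∈ G, Q) := by
      rw [map_prod]
      have : p ^ G.card = ∏ _Q ∈ G, p := by rw [Finset.prod_const]
      rw [this]
      refine Finset.prod_dvd_prod_of_dvd _ _ fun Q hQ => ?_
      obtain ⟨hQF, hQp⟩ := Finset.mem_filter.mp hQ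
      obtain ⟨hp', hf, heq⟩ := hpf Q hQF
      rw [heq, hQp]
      exact dvd_pow_self p hf.ne'
    have : p ^ G.card ∣ p ^ d := hnorm_prod.trans (hnorm_p ▸ hnorm_dvd)
    exact (Nat.pow_dvd_pow_iff_le_right hp.one_lt).mp this
  -- slot assignment
  set slot : Ideal R → ℕ := fun P => (F.filter (fun Q => pc Q = pc P)).toList.idxOf P
    with hslot
  have hslot_lt : ∀ P ∈ F, slot P < d := by
    intro P hP
    have hmem : P ∈ (F.filter (fun Q => pc Q = pc P)).toList := by
      rw [Finset.mem_toList]; exact Finset.mem_filter.mpr ⟨hP, rfl⟩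
    calc slot P < (F.filter (fun Q => pc Q = pc P)).toList.length :=
          List.idxOf_lt_length_iff.mpr hmem
      _ = (F.filter (fun Q => pc Q = pc P)).card := Finset.length_toList _
      _ ≤ d := hfiber_card (pc P) (hpf P hP).1
  have hslot_inj : ∀ P ∈ F, ∀ Q ∈ F, pc P = pc Q → slot P = slot Q → P = Q := by
    intro P hP Q hQ hpcq hs
    have hl : (F.filter (fun X => pc X = pc Q)) = (F.filter fun X => pc X = pc P) := by
      rw [hpcq]
    have hPmem : P ∈ (F.filter (fun X => pc X = pc P)).toList := by
      rw [Finset.mem_toList]; exact Finset.mem_filter.mpr ⟨hP, rfl⟩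
    have hQmem : Q ∈ (F.filter (fun X => pc X = pc P)).toList := by
      rw [Finset.mem_toList]; exact Finset.mem_filter.mpr ⟨hQ, hpcq.symm⟩
    have hs' : (F.filter (fun X => pc X = pc P)).toList.idxOf P =
        (F.filter (fun X => pc X = pc P)).toList.idxOf Q := by
      simpa [hslot, hl] using hs
    exact (List.idxOf_inj hPmem).mp hs'
  set slotF : Ideal R → Fin d := fun P => if h : slot P < d then ⟨slot P, h⟩ else ⟨0, hd0⟩
    with hslotF
  -- the map
  set Φ : Ideal R → (Fin d → ℕ) := fun I i =>
    ∏ P ∈ F.filter (fun P => slotF P = i),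
      Ideal.absNorm P ^ (UniqueFactorizationMonoid.normalizedFactors I).count P with hΦ
  -- factors of an ideal of norm n lie in F
  have hsub : ∀ I : Ideal R, I ≠ ⊥ → Ideal.absNorm I = n →
      (UniqueFactorizationMonoid.normalizedFactors I).toFinset ⊆ F := by
    intro I hI hIn P hP
    rw [Multiset.mem_toFinset] at hP
    have hprime := UniqueFactorizationMonoid.prime_of_normalized_factor P hP
    have hPd : P ∣ I := UniqueFactorizationMonoid.dvd_of_mem_normalizedFactors hP
    have hIN : I ∣ N := by
      rw [hN, Ideal.dvd_span_singleton, ← hIn]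
      exact Ideal.absNorm_mem I
    rw [hF, Multiset.mem_toFinset]
    exact (UniqueFactorizationMonoid.mem_normalizedFactors_iff hNb).mpr
      ⟨hprime, hPd.trans hIN⟩
  have hI0 : ∀ I : Ideal R, I ≠ ⊥ → I ≠ 0 := by
    intro I hI; simpa [Submodule.zero_eq_bot] using hI
  -- product of the tuple is n
  have hprodn : ∀ I : Ideal R, I ≠ ⊥ → Ideal.absNorm I = n → ∏ i, Φ I i = n := by
    intro I hI hIn
    have h1 : ∏ i, Φ I i = ∏ P ∈ F,
        Ideal.absNorm P ^ (UniqueFactorizationMonoid.normalizedFactors I).count P := by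
      rw [hΦ]
      exact Finset.prod_fiberwise_of_maps_to (fun P _ => Finset.mem_univ (slotF P)) _
    rw [h1]
    have h2 : ∏ P ∈ F,
        Ideal.absNorm P ^ (UniqueFactorizationMonoid.normalizedFactors I).count P
        = ∏ P ∈ (UniqueFactorizationMonoid.normalizedFactors I).toFinset,
            Ideal.absNorm P ^ (UniqueFactorizationMonoid.normalizedFactors I).count P := by
      refine (Finset.prod_subset (hsub I hI hIn) fun P hPF hPn => ?_).symm
      rw [Multiset.count_eq_zero_of_notMem (fun h => hPn (Multiset.mem_toFinset.mpr h)), pow_zero]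
    rw [h2, ← Finset.prod_multiset_map_count, ← map_multiset_prod,
      associated_iff_eq.mp (UniqueFactorizationMonoid.prod_normalizedFactors (hI0 I hI)), hIn]
  -- positivity of the tuple entries
  have hpos : ∀ I : Ideal R, ∀ i, 0 < Φ I i := by
    intro I i
    rw [hΦ]
    exact Finset.prod_pos fun P hP =>
      pow_pos (habs_pos P (Finset.mem_filter.mp hP).1) _
  -- key valuation computation
  have key : ∀ I : Ideal R, ∀ P ∈ F,
      (Φ I (slotF P)).factorization (pc P)
        = fc P * (UniqueFactorizationMonoid.normalizedFactors I).count P := by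
    intro I P hPF
    rw [hΦ]
    rw [Nat.factorization_prod (fun Q hQ =>
      pow_ne_zero _ (habs_pos Q (Finset.mem_filter.mp hQ).1).ne')]
    rw [Finset.sum_apply']
    have hmemP : P ∈ Finset.filter (fun Q => slotF Q = slotF P) F :=
      Finset.mem_filter.mpr ⟨hPF, rfl⟩
    refine Eq.trans (Finset.sum_eq_single_of_mem P hmemP ?_) ?_
    · intro Q hQ hQP
      obtain ⟨hQF, hQs⟩ := Finset.mem_filter.mp hQ
      obtain ⟨hq, hqf, hqe⟩ := hpf Q hQF
      rw [hqe, ← pow_mul, Nat.Prime.factorization_pow hq]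
      rw [Finsupp.single_apply, if_neg]
      intro hcontra
      apply hQP
      refine hslot_inj Q hQF P hPF hcontra ?_
      have hQlt := hslot_lt Q hQF
      have hPlt := hslot_lt P hPF
      have hsf : slotF Q = slotF P := hQs
      rw [hslotF] at hsf
      simp only [dif_pos hQlt, dif_pos hPlt] at hsf
      exact congrArg Fin.val hsf
    · obtain ⟨hp, hf, heq⟩ := hpf P hPF
      rw [heq, ← pow_mul, Nat.Prime.factorization_pow hp, Finsupp.single_eq_same]
  -- the injection
  refine Nat.card_le_card_of_injective
    (fun I => ⟨Φ I.1, fun i => hpos I.1 i, hprodn I.1 I.2.1 I.2.2⟩) ?_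
  rintro ⟨I, hI, hIn⟩ ⟨J, hJ, hJn⟩ h
  simp only [Subtype.mk.injEq] at h ⊢
  -- equal multisets of factors
  have hcount : ∀ P, (UniqueFactorizationMonoid.normalizedFactors I).count P
      = (UniqueFactorizationMonoid.normalizedFactors J).count P := by
    intro P
    by_cases hPF : P ∈ F
    · have h1 := key I P hPF
      have h2 := key J P hPF
      rw [h] at h1
      rw [h1] at h2
      exact (Nat.eq_of_mul_eq_mul_left (hpf P hPF).2.1 h2.symm).symm
    · rw [Multiset.count_eq_zero_of_notMem, Multiset.count_eq_zero_of_notMem]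
      · intro hmem
        exact hPF (hsub J hJ hJn (Multiset.mem_toFinset.mpr hmem))
      · intro hmem
        exact hPF (hsub I hI hIn (Multiset.mem_toFinset.mpr hmem))
  have hfac : UniqueFactorizationMonoid.normalizedFactors I
      = UniqueFactorizationMonoid.normalizedFactors J := Multiset.ext.mpr hcount
  calc I = (UniqueFactorizationMonoid.normalizedFactors I).prod :=
        (associated_iff_eq.mp (UniqueFactorizationMonoid.prod_normalizedFactors (hI0 I hI))).symm
    _ = (UniqueFactorizationMonoid.normalizedFactors J).prod := by rw [hfac]
    _ = J := associated_iff_eq.mp (UniqueFactorizationMonoid.prod_normalizedFactors (hI0 J hJ))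
end

section
/- Let F be a totally real number field and let Q(x₁, …, x_r) = ∑_{1 ≤ i ≤ j ≤ r} a_{ij} x_i x_j be a quadratic form with coefficients a_{ij} ∈ F that is totally positive definite, i.e., for every embedding σ : F → ℝ the real quadratic form ∑ σ(a_{ij}) x_i x_j is positive definite. Then there exists a constant C > 0, depending only on F and Q (but not on K), such that for every totally real number field K containing F and every vector v = (v₁, …, v_r) ∈ K^r one has (max_j ⌈v_j⌉_K)² ≤ C · ⌈Q(v)⌉_K, where Q(v) is computed in K using the inclusion F ⊆ K. -/
open NumberField

/-- The house of an element of a number field: the maximum of the absolute values of its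
images under all real embeddings. -/
noncomputable def realHouse {K : Type} [Field K] (x : K) : ℝ :=
  ⨆ σ : K →+* ℝ, |σ x|

/-- The value at `v` of the quadratic form `∑_{i ≤ j} a i j * x i * x j`. -/
def quadEval {R : Type} [CommRing R] {r : ℕ} (a : Fin r → Fin r → R) (v : Fin r → R) : R :=
  ∑ p ∈ Finset.univ.filter (fun p : Fin r × Fin r => p.1 ≤ p.2), a p.1 p.2 * v p.1 * v p.2

/-- Auxiliary: a real embedding built from a complex embedding with real image. -/
def embToReal {K : Type} [Field K] (ψ : K →+* ℂ) (h : ∀ x, (ψ x).im = 0) : K →+* ℝ where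
  toFun x := (ψ x).re
  map_one' := by simp
  map_mul' x y := by simp [Complex.mul_re, h]
  map_zero' := by simp
  map_add' x y := by simp [Complex.add_re]

lemma finite_real_embeddings (K : Type) [Field K] [NumberField K] : Finite (K →+* ℝ) := by
  have : Function.Injective (fun τ : K →+* ℝ => (Complex.ofRealHom.comp τ : K →+* ℂ)) := by
    intro τ₁ τ₂ h
    ext x
    have := RingHom.congr_fun h x
    simpa using this
  exact Finite.of_injective _ this

lemma nonempty_real_embeddings (K : Type) [Field K] [NumberField K]
    (hK : IsTotallyRealField K) : Nonempty (K →+* ℝ) := by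
  obtain ⟨ψ⟩ := (inferInstance : Nonempty (K →+* ℂ))
  exact ⟨embToReal ψ (hK ψ)⟩

lemma abs_le_realHouse {K : Type} [Field K] [NumberField K] (x : K) (τ : K →+* ℝ) :
    |τ x| ≤ realHouse x := by
  haveI : Finite (K →+* ℝ) := finite_real_embeddings K
  exact le_ciSup (Set.Finite.bddAbove (Set.finite_range fun τ : K →+* ℝ => |τ x|)) τ

lemma quadEval_ringHom {R S : Type} [CommRing R] [CommRing S] (f : R →+* S) {r : ℕ}
    (a : Fin r → Fin r → R) (v : Fin r → R) :
    f (quadEval a v) = quadEval (fun i j => f (a i j)) (fun i => f (v i)) := by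
  simp [quadEval, map_sum]

lemma quadEval_smul {r : ℕ} (a : Fin r → Fin r → ℝ) (t : ℝ) (x : Fin r → ℝ) :
    quadEval a (t • x) = t ^ 2 * quadEval a x := by
  simp only [quadEval, Finset.mul_sum, Pi.smul_apply, smul_eq_mul]
  exact Finset.sum_congr rfl fun p _ => by ring

lemma quadEval_zero {r : ℕ} (a : Fin r → Fin r → ℝ) : quadEval a (0 : Fin r → ℝ) = 0 := by
  simp [quadEval]

/-- Positive definite real quadratic forms are bounded below by a multiple of the norm
squared. -/
lemma exists_pos_quad_lower {r : ℕ} (hr : 0 < r) (A : Fin r → Fin r → ℝ)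
    (hA : ∀ x : Fin r → ℝ, x ≠ 0 → 0 < quadEval A x) :
    ∃ c : ℝ, 0 < c ∧ ∀ x : Fin r → ℝ, c * ‖x‖ ^ 2 ≤ quadEval A x := by
  haveI : Nonempty (Fin r) := Fin.pos_iff_nonempty.mp hr
  have hcont : Continuous (quadEval A : (Fin r → ℝ) → ℝ) := by
    unfold quadEval; fun_prop
  have hs : (Metric.sphere (0 : Fin r → ℝ) 1).Nonempty :=
    NormedSpace.sphere_nonempty.mpr zero_le_one
  obtain ⟨x₀, hx₀mem, hx₀min⟩ :=
    (isCompact_sphere (0 : Fin r → ℝ) 1).exists_isMinOn hs hcont.continuousOn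
  have hx₀norm : ‖x₀‖ = 1 := by simpa using hx₀mem
  have hx₀ne : x₀ ≠ 0 := by
    intro h; rw [h] at hx₀norm; simp at hx₀norm
  refine ⟨quadEval A x₀, hA x₀ hx₀ne, fun x => ?_⟩
  rcases eq_or_ne x 0 with rfl | hx
  · simp [quadEval_zero]
  · have hn : (0 : ℝ) < ‖x‖ := norm_pos_iff.mpr hx
    have hmem : (‖x‖⁻¹ • x) ∈ Metric.sphere (0 : Fin r → ℝ) 1 := by
      simp [norm_smul, abs_of_pos (inv_pos.mpr hn), inv_mul_cancel₀ hn.ne']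
    have hmin : quadEval A x₀ ≤ quadEval A (‖x‖⁻¹ • x) := hx₀min hmem
    rw [quadEval_smul A _ x] at hmin
    have h2 : (0 : ℝ) < ‖x‖ ^ 2 := by positivity
    calc quadEval A x₀ * ‖x‖ ^ 2 ≤ ((‖x‖⁻¹) ^ 2 * quadEval A x) * ‖x‖ ^ 2 :=
          mul_le_mul_of_nonneg_right hmin h2.le
      _ = quadEval A x := by field_simp

/-- For a totally positive definite quadratic form `Q = ∑_{i ≤ j} a_{ij} x_i x_j` over a
totally real number field `F`, there is `C > 0` depending only on `F` and `Q` such that for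
every totally real number field `K ⊇ F` and every `v ∈ K^r`,
`(max_j realHouse (v j))² ≤ C · realHouse (Q v)`. -/
theorem house_sq_le_house_quadEval (F : Type) [Field F] [NumberField F]
    (hF : IsTotallyRealField F) (r : ℕ) (a : Fin r → Fin r → F)
    (hQ : ∀ σ : F →+* ℝ, ∀ v : Fin r → ℝ, v ≠ 0 → 0 < quadEval (fun i j => σ (a i j)) v) :
    ∃ C : ℝ, 0 < C ∧
      ∀ (K : Type) [Field K] [NumberField K] [Algebra F K],
        IsTotallyRealField K →
        ∀ v : Fin r → K,
          (⨆ j, realHouse (v j)) ^ 2 ≤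
            C * realHouse (quadEval (fun i j => algebraMap F K (a i j)) v) := by
  rcases Nat.eq_zero_or_pos r with hr | hr
  · refine ⟨1, one_pos, fun K _ _ _ hK v => ?_⟩
    subst hr
    rw [iSup_of_empty', Real.sSup_empty]
    simpa [realHouse] using Real.iSup_nonneg (fun τ : K →+* ℝ => abs_nonneg _)
  · have key : ∀ σ : F →+* ℝ, ∃ c : ℝ, 0 < c ∧
        ∀ x : Fin r → ℝ, c * ‖x‖ ^ 2 ≤ quadEval (fun i j => σ (a i j)) x :=
      fun σ => exists_pos_quad_lower hr _ (hQ σ)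
    choose c hcpos hc using key
    haveI : Finite (F →+* ℝ) := finite_real_embeddings F
    haveI : Nonempty (F →+* ℝ) := nonempty_real_embeddings F hF
    obtain ⟨σ₀, hσ₀⟩ := Finite.exists_min c
    refine ⟨1 / c σ₀, by have := hcpos σ₀; positivity, fun K _ _ _ hK v => ?_⟩
    haveI : Finite (K →+* ℝ) := finite_real_embeddings K
    haveI : Nonempty (K →+* ℝ) := nonempty_real_embeddings K hK
    haveI : Nonempty (Fin r) := Fin.pos_iff_nonempty.mp hr
    set Qv := quadEval (fun i j => algebraMap F K (a i j)) v with hQv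
    have hH0 : 0 ≤ realHouse Qv := Real.iSup_nonneg fun τ => abs_nonneg _
    have hkey : ∀ (τ : K →+* ℝ) (j : Fin r), c σ₀ * |τ (v j)| ^ 2 ≤ realHouse Qv := by
      intro τ j
      set σ : F →+* ℝ := τ.comp (algebraMap F K) with hσ
      have h1 : c σ * ‖fun i => τ (v i)‖ ^ 2 ≤
          quadEval (fun i j => σ (a i j)) (fun i => τ (v i)) := hc σ _
      have h2 : τ Qv = quadEval (fun i j => σ (a i j)) (fun i => τ (v i)) := by
        rw [hQv, quadEval_ringHom]
        rfl
      have h3 : τ Qv ≤ realHouse Qv := le_trans (le_abs_self _) (abs_le_realHouse Qv τ)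
      have h4 : |τ (v j)| ≤ ‖fun i => τ (v i)‖ := by
        simpa [Real.norm_eq_abs] using norm_le_pi_norm (fun i => τ (v i)) j
      have h5 : c σ₀ ≤ c σ := hσ₀ σ
      have e1 : c σ₀ * |τ (v j)| ^ 2 ≤ c σ₀ * ‖fun i => τ (v i)‖ ^ 2 :=
        mul_le_mul_of_nonneg_left (pow_le_pow_left₀ (abs_nonneg _) h4 2) (hcpos σ₀).le
      have e2 : c σ₀ * ‖fun i => τ (v i)‖ ^ 2 ≤ c σ * ‖fun i => τ (v i)‖ ^ 2 :=
        mul_le_mul_of_nonneg_right h5 (by positivity)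
      linarith
    have hM : (⨆ j, realHouse (v j)) ≤ Real.sqrt (realHouse Qv / c σ₀) := by
      refine ciSup_le fun j => ?_
      show (⨆ τ : K →+* ℝ, |τ (v j)|) ≤ _
      refine ciSup_le fun τ => ?_
      rw [Real.le_sqrt (abs_nonneg _) (div_nonneg hH0 (hcpos σ₀).le),
        le_div_iff₀ (hcpos σ₀)]
      linarith [hkey τ j]
    have hMnn : 0 ≤ ⨆ j, realHouse (v j) :=
      le_ciSup_of_le (Set.Finite.bddAbove (Set.finite_range fun j => realHouse (v j)))
        (Classical.arbitrary (Fin r)) (Real.iSup_nonneg fun τ => abs_nonneg _)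
    calc (⨆ j, realHouse (v j)) ^ 2 ≤ Real.sqrt (realHouse Qv / c σ₀) ^ 2 :=
          pow_le_pow_left₀ hMnn hM 2
      _ = realHouse Qv / c σ₀ := Real.sq_sqrt (div_nonneg hH0 (hcpos σ₀).le)
      _ = 1 / c σ₀ * realHouse Qv := by ring
end

section
/- For all positive integers m and d, the set of subfields K of a fixed algebraic closure of ℚ such that K is a totally real number field of degree d over ℚ and such that for every α ∈ O_K⁺ the element m·α is a sum of squares of elements of O_K, is finite. -/
open NumberField

/-- A complex embedding with real values yields a real embedding. -/
def realEmbedding {K : Type} [Field K] (φ : K →+* ℂ) (h : ∀ x, (φ x).im = 0) : K →+* ℝ where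
  toFun x := (φ x).re
  map_one' := by simp
  map_mul' x y := by
    show (φ (x * y)).re = (φ x).re * (φ y).re
    rw [map_mul, Complex.mul_re, h, h]; ring
  map_zero' := by simp
  map_add' x y := by
    show (φ (x + y)).re = (φ x).re + (φ y).re
    rw [map_add, Complex.add_re]

lemma realEmbedding_norm {K : Type} [Field K] (φ : K →+* ℂ) (h : ∀ x, (φ x).im = 0) (x : K) :
    ‖φ x‖ = |realEmbedding φ h x| := by
  have hx : φ x = ((realEmbedding φ h x : ℝ) : ℂ) := by
    refine Complex.ext ?_ ?_
    · simp [realEmbedding]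
    · simp [h x]
  rw [hx, Complex.norm_real, Real.norm_eq_abs]

lemma ofReal_comp_norm {K : Type} [Field K] (σ : K →+* ℝ) (x : K) :
    ‖(Complex.ofRealHom.comp σ) x‖ = |σ x| := by
  simp [Complex.norm_real, Real.norm_eq_abs]

/-- Key descent lemma: if every totally positive integer times `m` is a sum of squares in a
totally real number field `K`, then `K` is generated (as a field) by its algebraic integers
all of whose conjugates are bounded by `9 * (m + 1)`. -/
theorem adjoin_small_eq_top (m : ℕ) (hm : 0 < m) (K : Type) [Field K] [NumberField K]
    (htr : IsTotallyRealField K)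
    (hsq : ∀ α : 𝓞 K, TotallyPositive (α : K) →
      ∃ (t : ℕ) (β : Fin t → 𝓞 K), (m : 𝓞 K) * α = ∑ i, β i ^ 2) :
    IntermediateField.adjoin ℚ
      {x : K | IsIntegral ℤ x ∧ ∀ φ : K →+* ℂ, ‖φ x‖ ≤ ((9 * (m + 1) : ℕ) : ℝ)} = ⊤ := by
  classical
  set C : ℕ := 9 * (m + 1) with hC
  set G : Set K := {x : K | IsIntegral ℤ x ∧ ∀ φ : K →+* ℂ, ‖φ x‖ ≤ ((C : ℕ) : ℝ)} with hG
  have key : ∀ n : ℕ, ∀ x : K, IsIntegral ℤ x → (∀ φ : K →+* ℂ, ‖φ x‖ ≤ (n : ℝ)) →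
      x ∈ IntermediateField.adjoin ℚ G := by
    intro n
    induction n using Nat.strong_induction_on with
    | _ n IH =>
      intro x hx hb
      by_cases hn : n ≤ C
      · refine IntermediateField.subset_adjoin ℚ G ⟨hx, fun φ => (hb φ).trans ?_⟩
        exact_mod_cast hn
      push_neg at hn
      -- bounds on casts
      have hm1 : (1 : ℝ) ≤ (m : ℝ) := by exact_mod_cast hm
      have hn10 : 9 * (m : ℝ) + 10 ≤ (n : ℝ) := by
        have h1 : (9 * (m + 1) + 1 : ℕ) ≤ n := hn
        have h2 : ((9 * (m + 1) + 1 : ℕ) : ℝ) ≤ (n : ℝ) := by exact_mod_cast h1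
        push_cast at h2
        linarith
      -- the totally positive element α = x + (n + 1)
      have hnint : IsIntegral ℤ (((n + 1 : ℕ) : K)) := by
        have h1 : ((n + 1 : ℕ) : K) = algebraMap ℤ K ((n : ℤ) + 1) := by push_cast; ring
        rw [h1]; exact isIntegral_algebraMap
      set a : 𝓞 K := ⟨x + ((n + 1 : ℕ) : K), hx.add hnint⟩ with ha
      have hmk : algebraMap (𝓞 K) K a = x + ((n + 1 : ℕ) : K) := rfl
      have hbx : ∀ σ : K →+* ℝ, |σ x| ≤ (n : ℝ) := by
        intro σ
        have := hb (Complex.ofRealHom.comp σ)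
        rwa [ofReal_comp_norm] at this
      have hpos : TotallyPositive (a : K) := by
        intro σ
        have h1 := abs_le.mp (hbx σ)
        have h2 : σ ((a : K)) = σ x + ((n + 1 : ℕ) : ℝ) := by
          rw [show ((a : K)) = x + ((n + 1 : ℕ) : K) from rfl, map_add, map_natCast]
        rw [h2]
        push_cast
        linarith [h1.1]
      obtain ⟨t, β, heq⟩ := hsq a hpos
      have h2 : ((m : ℕ) : K) * algebraMap (𝓞 K) K a
          = ∑ i, (algebraMap (𝓞 K) K (β i)) ^ 2 := by
        have h3 := congrArg (algebraMap (𝓞 K) K) heq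
        simpa only [map_mul, map_natCast, map_sum, map_pow] using h3
      -- each β i is in the adjoin by induction
      have hβmem : ∀ i, algebraMap (𝓞 K) K (β i) ∈ IntermediateField.adjoin ℚ G := by
        intro i
        have hone : 1 ≤ n := by omega
        have hcast : ((n - 1 : ℕ) : ℝ) = (n : ℝ) - 1 := by
          rw [Nat.cast_sub hone]; norm_num
        have hbound : ∀ φ : K →+* ℂ,
            ‖φ (algebraMap (𝓞 K) K (β i))‖ ≤ ((n - 1 : ℕ) : ℝ) := by
          intro φ
          set ρ := realEmbedding φ (htr φ) with hρ
          have h3 := congrArg ρ h2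
          simp only [map_mul, map_natCast, map_sum, map_pow] at h3
          have hterm : (ρ (algebraMap (𝓞 K) K (β i))) ^ 2
              ≤ (m : ℝ) * ρ (algebraMap (𝓞 K) K a) := by
            rw [h3]
            exact Finset.single_le_sum
              (f := fun j => (ρ (algebraMap (𝓞 K) K (β j))) ^ 2)
              (fun j _ => sq_nonneg _) (Finset.mem_univ i)
          have hρa : ρ (algebraMap (𝓞 K) K a) ≤ 2 * (n : ℝ) + 1 := by
            have h4 : ρ (algebraMap (𝓞 K) K a) = ρ x + ((n + 1 : ℕ) : ℝ) := by
              rw [hmk, map_add, map_natCast]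
            have h5 : ρ x ≤ (n : ℝ) := by
              have := hb φ
              rw [realEmbedding_norm φ (htr φ)] at this
              exact (abs_le.mp this).2
            rw [h4]; push_cast; linarith
          have h5 : (m : ℝ) * ρ (algebraMap (𝓞 K) K a) ≤ (m : ℝ) * (2 * (n : ℝ) + 1) :=
            mul_le_mul_of_nonneg_left hρa (by positivity)
          have h6 : (m : ℝ) * (2 * (n : ℝ) + 1) ≤ ((n : ℝ) - 1) ^ 2 := by
            nlinarith [hm1, hn10]
          rw [realEmbedding_norm φ (htr φ), hcast]
          nlinarith [sq_abs (ρ (algebraMap (𝓞 K) K (β i))),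
            abs_nonneg (ρ (algebraMap (𝓞 K) K (β i))),
            sq_nonneg (|ρ (algebraMap (𝓞 K) K (β i))| - ((n : ℝ) - 1))]
        exact IH (n - 1) (by omega) _ ((β i).isIntegral_coe) hbound
      -- conclude
      have hsummem : (∑ i, (algebraMap (𝓞 K) K (β i)) ^ 2) ∈ IntermediateField.adjoin ℚ G :=
        sum_mem (fun i _ => pow_mem (hβmem i) 2)
      have hm0 : ((m : ℕ) : K) ≠ 0 := Nat.cast_ne_zero.mpr hm.ne'
      have haK : algebraMap (𝓞 K) K a ∈ IntermediateField.adjoin ℚ G := by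
        have h7 : algebraMap (𝓞 K) K a
            = ((m : ℕ) : K)⁻¹ * ∑ i, (algebraMap (𝓞 K) K (β i)) ^ 2 := by
          rw [← h2, inv_mul_cancel_left₀ hm0]
        rw [h7]
        exact mul_mem (inv_mem (natCast_mem _ m)) hsummem
      have hxeq : x = algebraMap (𝓞 K) K a - ((n + 1 : ℕ) : K) := by
        rw [hmk]; ring
      rw [hxeq]
      exact sub_mem haK (natCast_mem _ _)
  -- now conclude the adjoin is everything
  rw [eq_top_iff]
  rintro z -
  obtain ⟨p, q, hq, rfl⟩ := IsFractionRing.div_surjective (A := 𝓞 K) z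
  have hint : ∀ w : 𝓞 K, algebraMap (𝓞 K) K w ∈ IntermediateField.adjoin ℚ G := by
    intro w
    obtain ⟨b, hbd⟩ := (Set.finite_range fun φ : K →+* ℂ =>
      ‖φ (algebraMap (𝓞 K) K w)‖).bddAbove
    refine key ⌈b⌉₊ _ w.isIntegral_coe (fun φ => ?_)
    exact le_trans (hbd ⟨φ, rfl⟩) (Nat.le_ceil b)
  exact div_mem (hint p) (hint q)

/-- For all positive integers `m` and `d`, there are only finitely many totally real number
fields `K` of degree `d` (inside a fixed algebraic closure of `ℚ`) such that every element of
`m·𝓞 K⁺` is a sum of squares of elements of `𝓞 K`. -/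
theorem finitely_many_fields_m_sums_of_squares (m d : ℕ) (hm : 0 < m) (hd : 0 < d) :
    {K : IntermediateField ℚ (AlgebraicClosure ℚ) |
      FiniteDimensional ℚ K ∧ Module.finrank ℚ K = d ∧ IsTotallyRealField K ∧
      ∀ α : 𝓞 K, TotallyPositive (α : K) →
        ∃ (t : ℕ) (β : Fin t → 𝓞 K), (m : 𝓞 K) * α = ∑ i, β i ^ 2}.Finite := by
  classical
  set A := AlgebraicClosure ℚ
  set C₁ : ℕ := 9 * (m + 1) with hC₁
  set C₂ : ℕ := Nat.ceil ((max ((C₁ : ℕ) : ℝ) 1) ^ d * ((d.choose (d / 2) : ℕ) : ℝ)) with hC₂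
  have hT := Polynomial.bUnion_roots_finite (algebraMap ℤ A) d
    (Set.finite_Icc (-(C₂ : ℤ)) (C₂ : ℤ))
  refine Set.Finite.subset ((hT.finite_subsets).image (fun s => IntermediateField.adjoin ℚ s)) ?_
  rintro K ⟨hfd, hrank, htr, hsq⟩
  haveI : FiniteDimensional ℚ K := hfd
  haveI : CharZero K := inferInstance
  haveI : NumberField K := ⟨⟩
  set G : Set K := {x : K | IsIntegral ℤ x ∧ ∀ φ : K →+* ℂ, ‖φ x‖ ≤ ((C₁ : ℕ) : ℝ)} with hG
  have htop : IntermediateField.adjoin ℚ G = ⊤ := adjoin_small_eq_top m hm K htr hsq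
  refine ⟨Subtype.val '' G, ?_, ?_⟩
  · -- the generators lie in the finite set of bounded roots
    rintro y ⟨x, hx, rfl⟩
    simp_rw [Set.mem_iUnion]
    have hmap := minpoly.isIntegrallyClosed_eq_field_fractions' ℚ hx.1
    refine ⟨minpoly ℤ x, ⟨?_, fun i => ?_⟩, ?_⟩
    · rw [← (minpoly.monic hx.1).natDegree_map (algebraMap ℤ ℚ), ← hmap]
      exact (minpoly.natDegree_le x).trans (le_of_eq hrank)
    · rw [Set.mem_Icc, ← abs_le, ← @Int.cast_le ℝ]
      refine (Eq.trans_le ?_ <| NumberField.Embeddings.coeff_bdd_of_norm_le hx.2 i).trans ?_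
      · rw [hmap, Polynomial.coeff_map, eq_intCast, Int.norm_cast_rat, Int.norm_eq_abs,
          Int.cast_abs]
      · rw [hrank]
        push_cast
        exact Nat.le_ceil _
    · exact Polynomial.mem_rootSet.mpr ⟨minpoly.ne_zero hx.1,
        (Polynomial.aeval_algebraMap_eq_zero_iff_of_injective (algebraMap K A).injective).mpr (minpoly.aeval ℤ x)⟩
  · show IntermediateField.adjoin ℚ (Subtype.val '' G) = K
    rw [← IntermediateField.lift_adjoin]
    exact (congrArg IntermediateField.lift htop).trans (IntermediateField.lift_top (K := K))
end

section
/- Let K be a totally real number field such that for every α ∈ O_K⁺ the element 2α is a sum of squares of elements of O_K. Then K is generated as a field extension of ℚ by the set of elements α ∈ O_K with house ⌈α⌉ < 2 + √6; that is, the subfield of K generated over ℚ by {α ∈ O_K : ⌈α⌉ < 2 + √6} equals K. -/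
open NumberField

section Aux

variable {K : Type} [Field K] [NumberField K]

/-- From a complex embedding of a totally real field, produce a real embedding. -/
noncomputable def realEmbOf (hK : IsTotallyRealField K) (φ : K →+* ℂ) : K →+* ℝ where
  toFun x := (φ x).re
  map_one' := by simp
  map_mul' x y := by simp [Complex.mul_re, hK φ x, hK φ y]
  map_zero' := by simp
  map_add' x y := by simp

lemma realEmb_nonempty (hK : IsTotallyRealField K) : Nonempty (K →+* ℝ) :=
  ⟨realEmbOf hK (Classical.arbitrary _)⟩

lemma abs_apply_le_realHouse (σ : K →+* ℝ) (x : K) : |σ x| ≤ realHouse x :=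
  le_ciSup (f := fun σ : K →+* ℝ => |σ x|)
    (Set.Finite.bddAbove (Set.finite_range _)) σ

lemma realHouse_lt (hK : IsTotallyRealField K) {x : K} {a : ℝ}
    (hx : ∀ σ : K →+* ℝ, |σ x| < a) : realHouse x < a := by
  have : Nonempty (K →+* ℝ) := realEmb_nonempty hK
  obtain ⟨σ0, h0⟩ := Finite.exists_max (fun σ : K →+* ℝ => |σ x|)
  exact lt_of_le_of_lt (ciSup_le h0) (hx σ0)

lemma norm_complex_eq (hK : IsTotallyRealField K) (φ : K →+* ℂ) (x : K) :
    ‖φ x‖ = |realEmbOf hK φ x| := by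
  have h := hK φ x
  have h2 : φ x = (((φ x).re : ℝ) : ℂ) := Complex.ext rfl (by simp [h])
  have h3 : realEmbOf hK φ x = (φ x).re := rfl
  rw [h3, h2, Complex.norm_real, Real.norm_eq_abs]
  simp

lemma integral_mem (hK : IsTotallyRealField K)
    (h : ∀ α : 𝓞 K, TotallyPositive (α : K) →
      ∃ (t : ℕ) (β : Fin t → 𝓞 K), 2 * α = ∑ i, β i ^ 2) :
    ∀ (n : ℕ) (β : 𝓞 K),
      Set.ncard {y : K | IsIntegral ℤ y ∧
        realHouse y < realHouse (algebraMap (𝓞 K) K β)} ≤ n →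
      algebraMap (𝓞 K) K β ∈ IntermediateField.adjoin ℚ
        {x : K | IsIntegral ℤ x ∧ realHouse x < 2 + Real.sqrt 6} := by
  have hne : Nonempty (K →+* ℝ) := realEmb_nonempty hK
  intro n
  induction n using Nat.strong_induction_on with
  | _ n ih =>
    intro β hn
    set F := IntermediateField.adjoin ℚ
        {x : K | IsIntegral ℤ x ∧ realHouse x < 2 + Real.sqrt 6} with hF
    by_cases hlt : realHouse (algebraMap (𝓞 K) K β) < 2 + Real.sqrt 6
    · exact IntermediateField.subset_adjoin _ _ ⟨RingOfIntegers.isIntegral_coe β, hlt⟩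
    push_neg at hlt
    set v := realHouse (algebraMap (𝓞 K) K β) with hv
    have hsqrt6 : Real.sqrt 6 ^ 2 = 6 := Real.sq_sqrt (by norm_num)
    have hs6 : (0:ℝ) ≤ Real.sqrt 6 := Real.sqrt_nonneg 6
    have hvpos : (0:ℝ) < v := by linarith
    obtain ⟨σ0, hσ0⟩ := Finite.exists_min (fun σ : K →+* ℝ => σ (algebraMap (𝓞 K) K β))
    have hmabs : |σ0 (algebraMap (𝓞 K) K β)| ≤ v := abs_apply_le_realHouse σ0 _
    by_cases hzz : ∃ zz : ℤ, (zz : ℝ) = σ0 (algebraMap (𝓞 K) K β)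
    · obtain ⟨zz, hz⟩ := hzz
      have : algebraMap (𝓞 K) K β = ((zz : ℤ) : K) := by
        apply σ0.injective
        rw [map_intCast]
        exact hz.symm
      rw [this]
      exact intCast_mem F zz
    · set z : ℤ := ⌊σ0 (algebraMap (𝓞 K) K β)⌋ with hzdef
      have hz1 : (z : ℝ) < σ0 (algebraMap (𝓞 K) K β) :=
        lt_of_le_of_ne (Int.floor_le _) (fun hh => hzz ⟨z, hh⟩)
      have hz2 : σ0 (algebraMap (𝓞 K) K β) < z + 1 := Int.lt_floor_add_one _
      have hpos : TotallyPositive (algebraMap (𝓞 K) K (β - (z : 𝓞 K))) := by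
        intro σ
        simp only [map_sub, map_intCast]
        have h1 : σ0 (algebraMap (𝓞 K) K β) ≤ σ (algebraMap (𝓞 K) K β) := hσ0 σ
        linarith
      obtain ⟨t, B, hB⟩ := h (β - (z : 𝓞 K)) hpos
      -- per-embedding identity
      have hσsum : ∀ σ : K →+* ℝ,
          ∑ j, (σ (algebraMap (𝓞 K) K (B j))) ^ 2
            = 2 * (σ (algebraMap (𝓞 K) K β) - (z : ℝ)) := by
        intro σ
        have h1 := congrArg (σ.comp (algebraMap (𝓞 K) K)) hB
        simp only [map_mul, map_sum, map_pow, map_sub, map_intCast, map_ofNat] at h1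
        simp only [RingHom.comp_apply] at h1
        linarith [h1]
      have hBbound : ∀ i, realHouse (algebraMap (𝓞 K) K (B i)) < v := by
        intro i
        apply realHouse_lt hK
        intro σ
        have hσβ : σ (algebraMap (𝓞 K) K β) ≤ v :=
          le_trans (le_abs_self _) (abs_apply_le_realHouse σ _)
        have hone : (σ (algebraMap (𝓞 K) K (B i))) ^ 2
            ≤ ∑ j, (σ (algebraMap (𝓞 K) K (B j))) ^ 2 :=
          Finset.single_le_sum (f := fun j => σ (algebraMap (𝓞 K) K (B j)) ^ 2)
            (fun j _ => sq_nonneg _) (Finset.mem_univ i)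
        rw [hσsum σ] at hone
        have hv2 : 2 * (σ (algebraMap (𝓞 K) K β) - (z : ℝ)) < v ^ 2 := by
          have hml : -v ≤ σ0 (algebraMap (𝓞 K) K β) := neg_le_of_abs_le hmabs
          nlinarith [sq_nonneg (v - (2 + Real.sqrt 6))]
        by_contra hcon
        push_neg at hcon
        have : v ^ 2 ≤ |σ (algebraMap (𝓞 K) K (B i))| ^ 2 :=
          pow_le_pow_left₀ hvpos.le hcon 2
        rw [sq_abs] at this
        linarith
      have hmem : ∀ i, algebraMap (𝓞 K) K (B i) ∈ F := by
        intro i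
        have hfin : {y : K | IsIntegral ℤ y ∧ realHouse y < v}.Finite := by
          apply (NumberField.Embeddings.finite_of_norm_le K ℂ v).subset
          rintro x ⟨hx1, hx2⟩
          exact ⟨hx1, fun φ => by
            rw [norm_complex_eq hK φ x]
            exact le_trans (abs_apply_le_realHouse _ _) hx2.le⟩
        have hss : {y : K | IsIntegral ℤ y ∧
              realHouse y < realHouse (algebraMap (𝓞 K) K (B i))}
            ⊂ {y : K | IsIntegral ℤ y ∧ realHouse y < v} := by
          constructor
          · rintro x ⟨hx1, hx2⟩
            exact ⟨hx1, hx2.trans (hBbound i)⟩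
          · intro hcon
            have hmm := hcon ⟨RingOfIntegers.isIntegral_coe (B i), hBbound i⟩
            exact lt_irrefl _ hmm.2
        have hcard := Set.ncard_lt_ncard hss hfin
        exact ih _ (lt_of_lt_of_le hcard hn) (B i) le_rfl
      have h2 : algebraMap (𝓞 K) K β
          = ((z : ℤ) : K) + (∑ i, (algebraMap (𝓞 K) K (B i)) ^ 2) / 2 := by
        have h1 := congrArg (algebraMap (𝓞 K) K) hB
        simp only [map_mul, map_sum, map_pow, map_sub, map_intCast, map_ofNat] at h1
        field_simp
        linear_combination h1
      rw [h2]
      refine add_mem (intCast_mem F z) (div_mem ?_ ?_)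
      · exact sum_mem (fun i _ => pow_mem (hmem i) 2)
      · exact_mod_cast intCast_mem F (2 : ℤ)

end Aux

/-- If every element of `2·𝓞 K⁺` is a sum of squares in `𝓞 K`, then `K` is generated over `ℚ`
by the algebraic integers in `K` of house less than `2 + √6`. -/
theorem generated_by_small_house (K : Type) [Field K] [NumberField K]
    (hK : IsTotallyRealField K)
    (h : ∀ α : 𝓞 K, TotallyPositive (α : K) →
      ∃ (t : ℕ) (β : Fin t → 𝓞 K), 2 * α = ∑ i, β i ^ 2) :
    IntermediateField.adjoin ℚ
      {x : K | IsIntegral ℤ x ∧ realHouse x < 2 + Real.sqrt 6} = ⊤ := by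
  rw [eq_top_iff]
  intro x _
  have halg : IsAlgebraic ℤ x :=
    (IsFractionRing.isAlgebraic_iff ℤ ℚ K).mpr
      (IsIntegral.isAlgebraic (IsIntegral.of_finite ℚ x))
  obtain ⟨y, d, hd0, hdx⟩ : ∃ (y : integralClosure ℤ K) (d : ℤ), d ≠ 0 ∧
      x * algebraMap ℤ K d = y := by
    obtain ⟨d, hd0, hint⟩ := halg.exists_integral_multiple
    exact ⟨⟨d • x, hint⟩, d, hd0, by rw [mul_comm]; simp [zsmul_eq_mul]⟩
  set β : 𝓞 K := ⟨(y : K), y.2⟩ with hβ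
  have hy : algebraMap (𝓞 K) K β ∈ IntermediateField.adjoin ℚ
      {x : K | IsIntegral ℤ x ∧ realHouse x < 2 + Real.sqrt 6} :=
    integral_mem hK h _ β le_rfl
  have hcoe : algebraMap (𝓞 K) K β = (y : K) := rfl
  have hdK : ((d : ℤ) : K) ≠ 0 := by exact_mod_cast hd0
  have hx : x = ((d : ℤ) : K)⁻¹ * (y : K) := by
    rw [eq_intCast] at hdx
    field_simp
    linear_combination hdx
  rw [hx]
  exact mul_mem (inv_mem (intCast_mem _ d)) (hcoe ▸ hy)
end

section
/- Fix a squarefree integer D > 1. There exist constants c > 0 and Δ₀ > 0, depending only on D, such that for every totally real number field K of degree 4 over ℚ with √D ∈ K and discriminant Δ ≥ Δ₀, and for every β ∈ O_K with β ∉ ℚ(√D), one has Tr_{K/ℚ}(β²) ≥ c·Δ^{1/2}. -/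
open NumberField

private lemma prodsq_le (a b c d S : ℝ) (hS : a ^ 2 + b ^ 2 + c ^ 2 + d ^ 2 = S) :
    ((a - b) * (c - d)) ^ 2 ≤ S ^ 2 := by
  subst hS
  have hX : (a - b) ^ 2 ≤ 2 * (a ^ 2 + b ^ 2) := by nlinarith [sq_nonneg (a + b)]
  have hY : (c - d) ^ 2 ≤ 2 * (c ^ 2 + d ^ 2) := by nlinarith [sq_nonneg (c + d)]
  calc ((a - b) * (c - d)) ^ 2 = (a - b) ^ 2 * (c - d) ^ 2 := by ring
    _ ≤ (2 * (a ^ 2 + b ^ 2)) * (2 * (c ^ 2 + d ^ 2)) :=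
        mul_le_mul hX hY (sq_nonneg _) (by positivity)
    _ ≤ (a ^ 2 + b ^ 2 + c ^ 2 + d ^ 2) ^ 2 := by
        nlinarith [sq_nonneg (a ^ 2 + b ^ 2 - c ^ 2 - d ^ 2)]

private lemma det4_formula (u v : Fin 4 → ℝ) :
    (Matrix.of fun i j => ![(1 : ℝ), u j, v j, u j * v j] i).det =
      -(u 0*u 1*v 0*v 2) + u 0*u 1*v 0*v 3 + u 0*u 1*v 1*v 2 - u 0*u 1*v 1*v 3
      + u 0*u 2*v 0*v 1 - u 0*u 2*v 0*v 3 - u 0*u 2*v 1*v 2 + u 0*u 2*v 2*v 3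
      - u 0*u 3*v 0*v 1 + u 0*u 3*v 0*v 2 + u 0*u 3*v 1*v 3 - u 0*u 3*v 2*v 3
      - u 1*u 2*v 0*v 1 + u 1*u 2*v 0*v 2 + u 1*u 2*v 1*v 3 - u 1*u 2*v 2*v 3
      + u 1*u 3*v 0*v 1 - u 1*u 3*v 0*v 3 - u 1*u 3*v 1*v 2 + u 1*u 3*v 2*v 3
      - u 2*u 3*v 0*v 2 + u 2*u 3*v 0*v 3 + u 2*u 3*v 1*v 2 - u 2*u 3*v 1*v 3 := by
  simp [Matrix.det_succ_row_zero, Fin.sum_univ_succ, Fin.succAbove,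
    show (Fin.succ 2 : Fin 4) = 3 from rfl, show (Fin.castSucc 2 : Fin 4) = 2 from rfl]
  norm_num
  ring

private lemma detsq_le (r : ℝ) (u v : Fin 4 → ℝ) (hu : ∀ j, u j = r ∨ u j = -r)
    (hd0 : (Matrix.of fun i j => ![(1 : ℝ), u j, v j, u j * v j] i).det ≠ 0) :
    (Matrix.of fun i j => ![(1 : ℝ), u j, v j, u j * v j] i).det ^ 2 ≤
      16 * (r ^ 2) ^ 2 * (v 0 ^ 2 + v 1 ^ 2 + v 2 ^ 2 + v 3 ^ 2) ^ 2 := by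
  set d := (Matrix.of fun i j => ![(1 : ℝ), u j, v j, u j * v j] i).det with hdd
  have hdet := det4_formula u v
  rw [← hdd] at hdet
  obtain h0 | h0 := hu 0 <;> obtain h1 | h1 := hu 1 <;> obtain h2 | h2 := hu 2 <;>
      obtain h3 | h3 := hu 3 <;> rw [h0, h1, h2, h3] at hdet
  · exfalso; apply hd0; rw [hdet]; ring
  · exfalso; apply hd0; rw [hdet]; ring
  · exfalso; apply hd0; rw [hdet]; ring
  · have h : d ^ 2 = 16 * (r ^ 2) ^ 2 * ((v 1 - v 0) * (v 3 - v 2)) ^ 2 := by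
      rw [hdet]; ring
    rw [h]
    exact mul_le_mul_of_nonneg_left (prodsq_le (v 1) (v 0) (v 3) (v 2) _ (by ring))
      (by positivity)
  · exfalso; apply hd0; rw [hdet]; ring
  · have h : d ^ 2 = 16 * (r ^ 2) ^ 2 * ((v 2 - v 0) * (v 3 - v 1)) ^ 2 := by
      rw [hdet]; ring
    rw [h]
    exact mul_le_mul_of_nonneg_left (prodsq_le (v 2) (v 0) (v 3) (v 1) _ (by ring))
      (by positivity)
  · have h : d ^ 2 = 16 * (r ^ 2) ^ 2 * ((v 3 - v 0) * (v 2 - v 1)) ^ 2 := by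
      rw [hdet]; ring
    rw [h]
    exact mul_le_mul_of_nonneg_left (prodsq_le (v 3) (v 0) (v 2) (v 1) _ (by ring))
      (by positivity)
  · exfalso; apply hd0; rw [hdet]; ring
  · exfalso; apply hd0; rw [hdet]; ring
  · have h : d ^ 2 = 16 * (r ^ 2) ^ 2 * ((v 3 - v 0) * (v 2 - v 1)) ^ 2 := by
      rw [hdet]; ring
    rw [h]
    exact mul_le_mul_of_nonneg_left (prodsq_le (v 3) (v 0) (v 2) (v 1) _ (by ring))
      (by positivity)
  · have h : d ^ 2 = 16 * (r ^ 2) ^ 2 * ((v 2 - v 0) * (v 3 - v 1)) ^ 2 := by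
      rw [hdet]; ring
    rw [h]
    exact mul_le_mul_of_nonneg_left (prodsq_le (v 2) (v 0) (v 3) (v 1) _ (by ring))
      (by positivity)
  · exfalso; apply hd0; rw [hdet]; ring
  · have h : d ^ 2 = 16 * (r ^ 2) ^ 2 * ((v 1 - v 0) * (v 3 - v 2)) ^ 2 := by
      rw [hdet]; ring
    rw [h]
    exact mul_le_mul_of_nonneg_left (prodsq_le (v 1) (v 0) (v 3) (v 2) _ (by ring))
      (by positivity)
  · exfalso; apply hd0; rw [hdet]; ring
  · exfalso; apply hd0; rw [hdet]; ring
  · exfalso; apply hd0; rw [hdet]; ring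

/-- Fix a squarefree integer `D > 1`. For totally real quartic fields `K ∋ √D` of large
enough discriminant `Δ`, every algebraic integer `β ∉ ℚ(√D)` satisfies
`Tr(β²) ≥ c·Δ^(1/2)`. -/
theorem trace_sq_lower_bound (D : ℤ) (hD1 : 1 < D) (hD : Squarefree D) :
    ∃ c Δ₀ : ℝ, 0 < c ∧ 0 < Δ₀ ∧
      ∀ (K : Type) [Field K] [NumberField K],
        IsTotallyRealField K → Module.finrank ℚ K = 4 →
        (∃ s : K, s ^ 2 = (D : K)) →
        Δ₀ ≤ (NumberField.discr K : ℝ) →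
        ∀ β : 𝓞 K,
          (∀ s : K, s ^ 2 = (D : K) → (β : K) ∉ IntermediateField.adjoin ℚ {s}) →
          c * (NumberField.discr K : ℝ) ^ ((1 : ℝ) / 2) ≤
            (Algebra.trace ℚ K ((β : K) ^ 2) : ℝ) := by
  have hD0 : (0 : ℝ) < (D : ℝ) := by exact_mod_cast lt_trans one_pos hD1
  refine ⟨1 / (4 * (D : ℝ)), 1, by positivity, one_pos, ?_⟩
  intro K _ _ htr hrank hsex hΔ β hβ
  obtain ⟨s, hs⟩ := hsex
  have hΔ1 : (1 : ℝ) ≤ (discr K : ℝ) := hΔ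
  -- `s` is not rational
  have hirr : ∀ q : ℚ, (q : K) ≠ s := by
    intro q hq
    have h2 : ((q ^ 2 : ℚ) : K) = ((D : ℚ) : K) := by push_cast; rw [hq, hs]
    have h2' : (q ^ 2 : ℚ) = (D : ℚ) := by exact_mod_cast h2
    have hint : IsIntegral ℤ q := by
      refine ⟨Polynomial.X ^ 2 - Polynomial.C D, Polynomial.monic_X_pow_sub_C D two_ne_zero, ?_⟩
      simp only [Polynomial.eval₂_sub, Polynomial.eval₂_pow, Polynomial.eval₂_X,
        Polynomial.eval₂_C, algebraMap_int_eq, Int.coe_castRingHom, sub_eq_zero]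
      exact_mod_cast h2'
    obtain ⟨z, hz⟩ := IsIntegrallyClosed.isIntegral_iff.mp hint
    rw [← hz] at h2'
    simp only [algebraMap_int_eq, eq_intCast] at h2'
    have hz2 : z ^ 2 = D := by exact_mod_cast h2'
    have hdvd : z * z ∣ D := by rw [← hz2]; exact Dvd.intro 1 (by ring)
    have hunit : IsUnit z := hD z hdvd
    rcases Int.isUnit_iff.mp hunit with rfl | rfl <;> omega
  -- `s` is an algebraic integer
  have hsInt : IsIntegral ℤ s := by
    refine ⟨Polynomial.X ^ 2 - Polynomial.C D, Polynomial.monic_X_pow_sub_C D two_ne_zero, ?_⟩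
    simp only [Polynomial.eval₂_sub, Polynomial.eval₂_pow, Polynomial.eval₂_X,
      Polynomial.eval₂_C, algebraMap_int_eq, Int.coe_castRingHom, sub_eq_zero]
    exact hs
  set S : 𝓞 K := ⟨s, hsInt⟩ with hS
  have hβF : (β : K) ∉ IntermediateField.adjoin ℚ {s} := hβ s hs
  have hsF : s ∈ IntermediateField.adjoin ℚ {s} := IntermediateField.mem_adjoin_simple_self ℚ s
  set fam : Fin 4 → K := ![1, s, (β : K), s * (β : K)] with hfam
  -- rational elements are in the adjoin
  have hQF : ∀ q : ℚ, (q : K) ∈ IntermediateField.adjoin ℚ {s} := by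
    intro q
    have : algebraMap ℚ K q = (q : K) := by
      rw [eq_ratCast (algebraMap ℚ K) q]
    exact this ▸ IntermediateField.algebraMap_mem _ q
  -- linear independence
  have hli : LinearIndependent ℚ fam := by
    rw [Fintype.linearIndependent_iff]
    intro g hg
    have hg' : (g 0 : K) + (g 1 : K) * s + ((g 2 : K) + (g 3 : K) * s) * (β : K) = 0 := by
      have := hg
      rw [Fin.sum_univ_four] at this
      simp only [hfam] at this
      simp only [Matrix.cons_val_zero, Matrix.cons_val_one, Matrix.head_cons,
        Matrix.cons_val_two, Matrix.tail_cons, Matrix.cons_val_three] at this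
      rw [Rat.smul_def, Rat.smul_def, Rat.smul_def, Rat.smul_def] at this
      push_cast at this ⊢
      linear_combination this
    have hzero : ∀ a b : ℚ, (a : K) + (b : K) * s = 0 → a = 0 ∧ b = 0 := by
      intro a b hab
      by_cases hb : b = 0
      · subst hb
        simp at hab
        exact ⟨by exact_mod_cast hab, rfl⟩
      · exfalso
        apply hirr (-a / b)
        have hbK : (b : K) ≠ 0 := by exact_mod_cast hb
        push_cast
        field_simp
        linear_combination -hab
    by_cases hq : ((g 2 : K) + (g 3 : K) * s) = 0
    · obtain ⟨h2, h3⟩ := hzero _ _ hq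
      rw [hq] at hg'
      simp at hg'
      obtain ⟨h0, h1⟩ := hzero _ _ hg'
      intro i
      fin_cases i <;> assumption
    · exfalso
      apply hβF
      have hmem1 : (g 0 : K) + (g 1 : K) * s ∈ IntermediateField.adjoin ℚ {s} :=
        add_mem (hQF _) (mul_mem (hQF _) hsF)
      have hmem2 : (g 2 : K) + (g 3 : K) * s ∈ IntermediateField.adjoin ℚ {s} :=
        add_mem (hQF _) (mul_mem (hQF _) hsF)
      have hβeq : (β : K) = -((g 0 : K) + (g 1 : K) * s) * ((g 2 : K) + (g 3 : K) * s)⁻¹ := by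
        rw [eq_mul_inv_iff_mul_eq₀ hq]
        linear_combination hg'
      rw [hβeq]
      exact mul_mem (neg_mem hmem1) (inv_mem hmem2)
  -- basis from the family
  have hcard : Fintype.card (Fin 4) = Module.finrank ℚ K := by simp [hrank]
  set b : Module.Basis (Fin 4) ℚ K := basisOfLinearIndependentOfCardEqFinrank hli hcard with hbdef
  have hb : ⇑b = fam := coe_basisOfLinearIndependentOfCardEqFinrank hli hcard
  -- integral lifts
  set E : Fin 4 → 𝓞 K := ![1, S, β, S * β] with hE
  have hEcoe : ∀ j, algebraMap (𝓞 K) K (E j) = fam j := by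
    intro j
    fin_cases j <;> simp [hE, hfam, hS] <;> rfl
  -- reindexed integral basis
  have hι : Fintype.card (Module.Free.ChooseBasisIndex ℤ (𝓞 K)) = 4 := by
    rw [← Module.finrank_eq_card_chooseBasisIndex, RingOfIntegers.rank, hrank]
  set eqv : Module.Free.ChooseBasisIndex ℤ (𝓞 K) ≃ Fin 4 := Fintype.equivFinOfCardEq hι with heqv
  set b₀ : Module.Basis (Fin 4) ℚ K := (integralBasis K).reindex eqv with hb₀
  set P : Matrix (Fin 4) (Fin 4) ℚ := b₀.toMatrix fam with hP
  have hvec := b₀.toMatrix_map_vecMul (v := fam)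
  have hdiscr_b₀ : Algebra.discr ℚ ⇑b₀ = ((discr K : ℤ) : ℚ) := by
    rw [hb₀, Module.Basis.coe_reindex]
    exact (Algebra.discr_reindex (b := integralBasis K) (f := eqv)).trans (coe_discr K).symm
  have hdiscr_fam : Algebra.discr ℚ fam = P.det ^ 2 * ((discr K : ℤ) : ℚ) := by
    rw [← hvec, Algebra.discr_of_matrix_vecMul, hdiscr_b₀]
  -- P has integral entries
  have hPint : ∀ i j, IsIntegral ℤ (P i j) := by
    intro i j
    rw [hP, Module.Basis.toMatrix_apply, hb₀, Module.Basis.repr_reindex_apply, ← hEcoe j,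
      integralBasis_repr_apply]
    exact isIntegral_algebraMap
  obtain ⟨q, hq⟩ := IsIntegrallyClosed.isIntegral_iff.mp (IsIntegral.det hPint)
  have hdiscr_ne : Algebra.discr ℚ fam ≠ 0 := by
    have := Algebra.discr_not_zero_of_basis ℚ b
    rwa [hb] at this
  have hq0 : q ≠ 0 := by
    rintro rfl
    simp only [map_zero] at hq
    rw [← hq] at hdiscr_fam
    simp at hdiscr_fam
    exact hdiscr_ne hdiscr_fam
  -- embeddings into ℂ
  have hcard2 : Fintype.card (Fin 4) = Fintype.card (K →ₐ[ℚ] ℂ) := by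
    rw [AlgHom.card, hrank, Fintype.card_fin]
  set φ : Fin 4 ≃ (K →ₐ[ℚ] ℂ) := Fintype.equivOfCardEq hcard2 with hφ
  have him : ∀ (j : Fin 4) (x : K), ((φ j) x).im = 0 := fun j x => htr ((φ j) : K →+* ℂ) x
  have hre : ∀ (j : Fin 4) (x : K), (φ j) x = ((((φ j) x).re : ℝ) : ℂ) := by
    intro j x
    exact (Complex.ext (by simp) (by simp [him j x])).symm
  set u : Fin 4 → ℝ := fun j => ((φ j) s).re with hu
  set v : Fin 4 → ℝ := fun j => ((φ j) (β : K)).re with hv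
  set N : Matrix (Fin 4) (Fin 4) ℝ :=
    Matrix.of (fun i j => ![(1 : ℝ), u j, v j, u j * v j] i) with hN
  have hM : Algebra.embeddingsMatrixReindex ℚ ℂ fam φ = N.map (fun x : ℝ => (x : ℂ)) := by
    ext i j
    have hent : Algebra.embeddingsMatrixReindex ℚ ℂ fam φ i j = (φ j) (fam i) := rfl
    rw [hent]
    fin_cases i
    · simpa [hfam, hN] using map_one (φ j)
    · simpa [hfam, hN] using hre j s
    · simpa [hfam, hN] using hre j (β : K)
    · have : (φ j) (s * (β : K)) = (((u j * v j : ℝ) : ℝ) : ℂ) := by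
        rw [map_mul, hre j s, hre j (β : K)]
        push_cast
        ring
      simpa [hfam, hN] using this
  have hdiscr_det := Algebra.discr_eq_det_embeddingsMatrixReindex_pow_two ℚ ℂ fam φ
  rw [hM] at hdiscr_det
  have hreal : ((Algebra.discr ℚ fam : ℚ) : ℝ) = N.det ^ 2 := by
    have hdet2 : (N.map (fun x : ℝ => (x : ℂ))).det = ((N.det : ℝ) : ℂ) :=
      (RingHom.map_det Complex.ofRealHom N).symm
    rw [hdet2, eq_ratCast (algebraMap ℚ ℂ)] at hdiscr_det
    apply Complex.ofReal_injective
    push_cast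
    exact hdiscr_det
  -- trace as sum of squares
  have htrace : ((Algebra.trace ℚ K ((β : K) ^ 2) : ℚ) : ℝ) =
      v 0 ^ 2 + v 1 ^ 2 + v 2 ^ 2 + v 3 ^ 2 := by
    have h1 : (algebraMap ℚ ℂ) (Algebra.trace ℚ K ((β : K) ^ 2)) =
        ∑ σ : K →ₐ[ℚ] ℂ, σ ((β : K) ^ 2) := trace_eq_sum_embeddings (E := ℂ)
    rw [← Equiv.sum_comp φ (fun σ : K →ₐ[ℚ] ℂ => σ ((β : K) ^ 2))] at h1
    have h2 : ∀ j : Fin 4, (φ j) ((β : K) ^ 2) = (((v j ^ 2 : ℝ) : ℝ) : ℂ) := by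
      intro j
      rw [map_pow, hre j (β : K)]
      push_cast
      ring
    simp only [h2] at h1
    rw [Fin.sum_univ_four, eq_ratCast (algebraMap ℚ ℂ)] at h1
    apply Complex.ofReal_injective
    push_cast
    push_cast at h1
    exact h1
  -- values of u
  have hu2 : ∀ j, u j ^ 2 = (D : ℝ) := by
    intro j
    have h1 : ((φ j) s) ^ 2 = (((D : ℝ) : ℝ) : ℂ) := by
      rw [← map_pow, hs, map_intCast]
      push_cast
      ring
    rw [hre j s] at h1
    exact_mod_cast h1
  set r : ℝ := |u 0| with hr
  have hr2 : r ^ 2 = (D : ℝ) := by rw [hr, sq_abs]; exact hu2 0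
  have hualt : ∀ j, u j = r ∨ u j = -r := by
    intro j
    have habs : |u j| = |u 0| :=
      (sq_eq_sq_iff_abs_eq_abs (u j) (u 0)).mp (by rw [hu2 j, hu2 0])
    exact (abs_eq (abs_nonneg (u 0))).mp habs
  -- determinant nonzero
  have hdN0 : N.det ≠ 0 := by
    intro h0
    apply hdiscr_ne
    have : ((Algebra.discr ℚ fam : ℚ) : ℝ) = 0 := by rw [hreal, h0]; ring
    exact_mod_cast this
  have hdet_le := detsq_le r u v hualt hdN0
  rw [hr2] at hdet_le
  generalize hgen : N.det = dN at hreal hdet_le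
  -- discriminant bound
  have hfd : ((Algebra.discr ℚ fam : ℚ) : ℝ) = (q : ℝ) ^ 2 * ((discr K : ℤ) : ℝ) := by
    rw [hdiscr_fam, ← hq, algebraMap_int_eq, eq_intCast]
    push_cast
    ring
  have h1q : (1 : ℝ) ≤ (q : ℝ) ^ 2 := by
    have h := Int.one_le_abs hq0
    have h' : (1 : ℝ) ≤ |(q : ℝ)| := by exact_mod_cast h
    calc (1 : ℝ) = 1 ^ 2 := (one_pow 2).symm
      _ ≤ |(q : ℝ)| ^ 2 := pow_le_pow_left₀ zero_le_one h' 2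
      _ = (q : ℝ) ^ 2 := sq_abs _
  have hΔled : ((discr K : ℤ) : ℝ) ≤ dN ^ 2 := by
    have h' : (q : ℝ) ^ 2 * ((discr K : ℤ) : ℝ) = dN ^ 2 := by rw [← hfd, hreal]
    rw [← h']
    exact le_mul_of_one_le_left (le_trans zero_le_one hΔ1) h1q
  set T : ℝ := v 0 ^ 2 + v 1 ^ 2 + v 2 ^ 2 + v 3 ^ 2 with hT
  have hT0 : 0 ≤ T := by rw [hT]; positivity
  have hfin : ((discr K : ℤ) : ℝ) ≤ (4 * (D : ℝ) * T) ^ 2 := by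
    have he : (4 * (D : ℝ) * T) ^ 2 = 16 * (D : ℝ) ^ 2 * T ^ 2 := by ring
    rw [he]
    exact le_trans hΔled hdet_le
  have hsq : Real.sqrt ((discr K : ℤ) : ℝ) ≤ 4 * (D : ℝ) * T := by
    have := Real.sqrt_le_sqrt hfin
    rwa [Real.sqrt_sq (by positivity)] at this
  rw [← Real.sqrt_eq_rpow, htrace]
  calc 1 / (4 * (D : ℝ)) * Real.sqrt ((discr K : ℤ) : ℝ)
      ≤ 1 / (4 * (D : ℝ)) * (4 * (D : ℝ) * T) :=
        mul_le_mul_of_nonneg_left hsq (by positivity)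
    _ = T := by field_simp
end

section
/- Let F be a totally real number field, let d, r be positive integers, let Q be a quadratic form on F^r with coefficients in F that is totally positive definite (positive definite under every embedding F → ℝ), and let ℓ be a finitely generated O_F-submodule of F^r that spans F^r and satisfies Q(v) ∈ O_F for all v ∈ ℓ. Then there exists a positive integer m such that for every totally real number field K containing F with [K:ℚ] = d and every finitely generated O_K-submodule M of K^r satisfying Q(w) ∈ O_K for all w ∈ M and containing the O_K-span ℓ_K of ℓ inside K^r, one has m·M ⊆ ℓ_K. -/
open NumberField

open Matrix

section quad
variable {R S : Type} [CommRing R] [CommRing S] {r : ℕ}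

lemma quadEval_map (f : R →+* S) (a : Fin r → Fin r → R) (v : Fin r → R) :
    f (quadEval a v) = quadEval (fun i j => f (a i j)) (fun i => f (v i)) := by
  simp [quadEval, map_sum]

def bform (a : Fin r → Fin r → R) (v w : Fin r → R) : R :=
  quadEval a (fun i => v i + w i) - quadEval a v - quadEval a w

lemma bform_eq (a : Fin r → Fin r → R) (v w : Fin r → R) : bform a v w =
    ∑ p ∈ Finset.univ.filter (fun p : Fin r × Fin r => p.1 ≤ p.2),
      a p.1 p.2 * (v p.1 * w p.2 + v p.2 * w p.1) := by
  simp only [bform, quadEval, ← Finset.sum_sub_distrib]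
  exact Finset.sum_congr rfl fun p _ => by ring

lemma bform_map (f : R →+* S) (a : Fin r → Fin r → R) (v w : Fin r → R) :
    f (bform a v w) = bform (fun i j => f (a i j)) (fun i => f (v i)) (fun i => f (w i)) := by
  simp [bform, quadEval_map]

lemma bform_self (a : Fin r → Fin r → R) (v : Fin r → R) :
    bform a v v = 2 * quadEval a v := by
  rw [bform_eq, quadEval, Finset.mul_sum]
  exact Finset.sum_congr rfl fun p _ => by ring

lemma bform_sum_left {ι : Type} (t : Finset ι) (g : ι → Fin r → R)
    (a : Fin r → Fin r → R) (w : Fin r → R) :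
    bform a (fun j => ∑ i ∈ t, g i j) w = ∑ i ∈ t, bform a (g i) w := by
  simp only [bform_eq]
  rw [Finset.sum_comm]
  exact Finset.sum_congr rfl fun p _ => by
    simp [Finset.sum_mul, Finset.mul_sum, ← Finset.sum_add_distrib]

lemma bform_smul_left (c : R) (v : Fin r → R) (a : Fin r → Fin r → R) (w : Fin r → R) :
    bform a (fun j => c * v j) w = c * bform a v w := by
  simp only [bform_eq, Finset.mul_sum]
  exact Finset.sum_congr rfl fun p _ => by ring

lemma bform_comm (a : Fin r → Fin r → R) (v w : Fin r → R) :
    bform a v w = bform a w v := by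
  simp only [bform_eq]
  exact Finset.sum_congr rfl fun p _ => by ring

end quad


set_option maxHeartbeats 2000000 in
set_option synthInstance.maxHeartbeats 1000000 in
/-- Let `F` be totally real, `Q` totally positive definite on `F^r`, and `ℓ ⊆ F^r` a finitely
generated `𝓞 F`-submodule spanning `F^r` with `Q(ℓ) ⊆ 𝓞 F`. Then there is a positive integer
`m` such that for every totally real number field `K ⊇ F` of degree `d` over `ℚ` and every
finitely generated `𝓞 K`-submodule `M ⊆ K^r` with `Q(M) ⊆ 𝓞 K` containing the `𝓞 K`-span
`ℓ_K` of `ℓ`, one has `m·M ⊆ ℓ_K`. -/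
theorem exists_multiplier_into_extended_lattice (F : Type) [Field F] [NumberField F]
    (hF : IsTotallyRealField F) (d r : ℕ) (hd : 0 < d) (hr : 0 < r)
    (a : Fin r → Fin r → F)
    (hQ : ∀ σ : F →+* ℝ, ∀ v : Fin r → ℝ, v ≠ 0 → 0 < quadEval (fun i j => σ (a i j)) v)
    (ℓ : Submodule (𝓞 F) (Fin r → F)) (hfg : ℓ.FG)
    (hspan : Submodule.span F (ℓ : Set (Fin r → F)) = ⊤)
    (hint : ∀ v ∈ ℓ, IsIntegral ℤ (quadEval a v)) :
    ∃ m : ℕ, 0 < m ∧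
      ∀ (K : Type) [Field K] [NumberField K] [Algebra F K],
        IsTotallyRealField K → Module.finrank ℚ K = d →
        ∀ M : Submodule (𝓞 K) (Fin r → K), M.FG →
          (∀ w ∈ M, IsIntegral ℤ (quadEval (fun i j => algebraMap F K (a i j)) w)) →
          Submodule.span (𝓞 K)
              ((fun v : Fin r → F => fun i => algebraMap F K (v i)) '' (ℓ : Set (Fin r → F)))
            ≤ M →
          ∀ w ∈ M, m • w ∈ Submodule.span (𝓞 K)
              ((fun v : Fin r → F => fun i => algebraMap F K (v i)) ''
                (ℓ : Set (Fin r → F))) := by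
  classical
  -- a real embedding of F
  obtain ⟨σ⟩ : Nonempty (F →+* ℂ) := inferInstance
  let τ : F →+* ℝ :=
  { toFun := fun x => (σ x).re
    map_one' := by simp
    map_mul' := fun x y => by
      show (σ (x*y)).re = (σ x).re * (σ y).re
      rw [_root_.map_mul, Complex.mul_re, hF σ x, hF σ y]; ring
    map_zero' := by simp
    map_add' := fun x y => by
      show (σ (x+y)).re = (σ x).re + (σ y).re
      rw [_root_.map_add, Complex.add_re] }
  -- basis of F^r inside ℓ
  obtain ⟨s, hsub, hspan', hli⟩ := exists_linearIndependent F (ℓ : Set (Fin r → F))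
  rw [hspan] at hspan'
  haveI := (hli.setFinite).fintype
  let b : Module.Basis s F (Fin r → F) := Module.Basis.mk hli (by rw [Subtype.range_coe, hspan'])
  have hcard : Fintype.card s = r := by
    rw [← Module.finrank_eq_card_basis b, Module.finrank_fin_fun]
  let eB : Module.Basis (Fin r) F (Fin r → F) := b.reindex (Fintype.equivFinOfCardEq hcard)
  let e : Fin r → Fin r → F := fun i => eB i
  have he : ∀ i, e i ∈ ℓ := by
    intro i
    have : e i ∈ s := by
      simp only [e, eB, Module.Basis.coe_reindex, Function.comp_apply, b, Module.Basis.mk_apply]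
      exact Subtype.coe_prop _
    exact hsub this
  -- the matrix of the basis vectors is invertible
  let E : Matrix (Fin r) (Fin r) F := Matrix.of fun i j => e i j
  have hE : IsUnit E.det := by
    have h1 : (Pi.basisFun F (Fin r)).toMatrix ⇑eB * eB.toMatrix ⇑(Pi.basisFun F (Fin r)) = 1 :=
      Module.Basis.toMatrix_mul_toMatrix_flip _ _
    have h2 : (Pi.basisFun F (Fin r)).toMatrix ⇑eB = Eᵀ := by
      ext i j
      simp [Module.Basis.toMatrix, E, e, Pi.basisFun_repr]
    rw [h2] at h1
    have := Matrix.isUnit_det_of_right_inverse h1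
    rwa [Matrix.det_transpose] at this
  -- Gram matrix
  let G : Matrix (Fin r) (Fin r) F := Matrix.of fun i k => bform a (e i) (e k)
  have hGint : ∀ i k, IsIntegral ℤ (G i k) := by
    intro i k
    have h1 : IsIntegral ℤ (quadEval a (fun j => e i j + e k j)) := by
      have := hint _ (ℓ.add_mem (he i) (he k))
      exact this
    exact (h1.sub (hint _ (he i))).sub (hint _ (he k))
  have hGdet : G.det ≠ 0 := by
    intro h
    have hmap : (G.map ⇑τ).det = 0 := by
      rw [← RingHom.mapMatrix_apply, ← RingHom.map_det, h, map_zero]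
    obtain ⟨c, hc0, hc⟩ := (Matrix.exists_mulVec_eq_zero_iff).mpr hmap
    let u : Fin r → ℝ := fun j => ∑ i, c i * τ (e i j)
    have hu0 : u ≠ 0 := by
      intro h0
      apply hc0
      have hu : (E.map ⇑τ)ᵀ *ᵥ c = 0 := by
        funext j
        have h1 : ((E.map ⇑τ)ᵀ *ᵥ c) j = u j := by
          simp [Matrix.mulVec, dotProduct, u, E, mul_comm]
        rw [h1, h0, Pi.zero_apply]
      have hdet : IsUnit ((E.map ⇑τ)ᵀ).det := by
        rw [Matrix.det_transpose, ← RingHom.mapMatrix_apply, ← RingHom.map_det]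
        exact isUnit_iff_ne_zero.mpr fun hh => hE.ne_zero (τ.injective (by rw [hh, map_zero]))
      calc c = 1 *ᵥ c := by simp
        _ = (((E.map ⇑τ)ᵀ)⁻¹ * (E.map ⇑τ)ᵀ) *ᵥ c := by rw [Matrix.nonsing_inv_mul _ hdet]
        _ = ((E.map ⇑τ)ᵀ)⁻¹ *ᵥ ((E.map ⇑τ)ᵀ *ᵥ c) := by rw [Matrix.mulVec_mulVec]
        _ = 0 := by rw [hu, Matrix.mulVec_zero]
    have hstep : ∀ w, bform (fun i j => τ (a i j)) u w
        = ∑ i, c i * bform (fun i j => τ (a i j)) (fun j => τ (e i j)) w := by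
      intro w
      rw [show bform (fun i j => τ (a i j)) u w
          = bform (fun i j => τ (a i j)) (fun j => ∑ i, (fun ii jj => c ii * τ (e ii jj)) i j) w
          from rfl]
      rw [bform_sum_left]
      exact Finset.sum_congr rfl fun i _ => bform_smul_left _ _ _ _
    have hbu : bform (fun i j => τ (a i j)) u u = 0 := by
      have h1 : bform (fun i j => τ (a i j)) u u
          = ∑ i, c i * ∑ k, c k * τ (G i k) := by
        rw [hstep u]
        refine Finset.sum_congr rfl fun i _ => ?_
        congr 1
        rw [bform_comm, hstep]
        refine Finset.sum_congr rfl fun k _ => ?_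
        congr 1
        rw [← bform_map]
        exact congrArg τ (bform_comm a (e k) (e i))
      rw [h1]
      have h2 : ∀ i, ∑ k, c k * τ (G i k) = 0 := by
        intro i
        have := congrFun hc i
        simpa [Matrix.mulVec, dotProduct, mul_comm] using this
      simp [h2]
    have h2Q : 2 * quadEval (fun i j => τ (a i j)) u = 0 := by
      rw [← bform_self]; exact hbu
    have hpos := hQ τ u hu0
    linarith
  -- clear denominators of G.det⁻¹
  obtain ⟨y, hy0, hym⟩ := exists_integral_multiples ℤ ℚ ({G.det⁻¹} : Finset F)
  have hz : IsIntegral ℤ ((y : F) * G.det⁻¹) := by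
    have := hym G.det⁻¹ (Finset.mem_singleton_self _)
    rwa [zsmul_eq_mul] at this
  have hmint : IsIntegral ℤ ((y.natAbs : F) * G.det⁻¹) := by
    have h1 : ((y.natAbs : F)) = ((y.natAbs : ℤ) : F) := (Int.cast_natCast y.natAbs).symm
    rcases Int.natAbs_eq y with h | h
    · rw [h1, ← h]; exact hz
    · rw [h1, show ((y.natAbs : ℤ) : F) = -((y : ℤ) : F) by
        rw [← Int.cast_neg]; congr 1; omega]
      rw [neg_mul]
      exact hz.neg
  refine ⟨y.natAbs, Int.natAbs_pos.mpr hy0, ?_⟩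
  intro K _ _ _ hKtr hKd M hMfg hMint hMle w hw
  set φ := algebraMap F K with hφ
  have hφinj : Function.Injective φ := φ.injective
  have heK : ∀ i, (fun j => φ (e i j)) ∈ Submodule.span (𝓞 K)
      ((fun v : Fin r → F => fun i => algebraMap F K (v i)) '' (ℓ : Set (Fin r → F))) :=
    fun i => Submodule.subset_span ⟨e i, he i, rfl⟩
  have hdetK : IsUnit ((E.map ⇑φ)ᵀ).det := by
    rw [Matrix.det_transpose, ← RingHom.mapMatrix_apply, ← RingHom.map_det]
    exact isUnit_iff_ne_zero.mpr fun hh => hE.ne_zero (hφinj (by rw [hh, map_zero]))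
  set c : Fin r → K := ((E.map ⇑φ)ᵀ)⁻¹ *ᵥ w with hcdef
  have hwc : ∀ j, w j = ∑ i, c i * φ (e i j) := by
    intro j
    have h1 : (E.map ⇑φ)ᵀ *ᵥ c = w := by
      rw [hcdef, Matrix.mulVec_mulVec, Matrix.mul_nonsing_inv _ hdetK, Matrix.one_mulVec]
    have h2 := congrFun h1 j
    rw [← h2]
    simp [Matrix.mulVec, dotProduct, E, mul_comm]
  set aK : Fin r → Fin r → K := fun i j => φ (a i j) with haK
  have hbint : ∀ k, IsIntegral ℤ (bform aK w (fun j => φ (e k j))) := by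
    intro k
    have h1 : (fun j => w j + φ (e k j)) ∈ M := M.add_mem hw (hMle (heK k))
    exact ((hMint _ h1).sub (hMint _ hw)).sub (hMint _ (hMle (heK k)))
  have hstepK : ∀ v, bform aK w v = ∑ i, c i * bform aK (fun j => φ (e i j)) v := by
    intro v
    rw [show bform aK w v
        = bform aK (fun j => ∑ i, (fun ii jj => c ii * φ (e ii jj)) i j) v by
      congr 1; funext j; exact hwc j]
    rw [bform_sum_left]
    exact Finset.sum_congr rfl fun i _ => bform_smul_left _ _ _ _
  have hkey : ∀ k, bform aK w (fun j => φ (e k j)) = ∑ i, c i * φ (G i k) := by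
    intro k
    rw [hstepK]
    refine Finset.sum_congr rfl fun i _ => ?_
    congr 1
    rw [haK, ← bform_map]
    rfl
  set A : Matrix (Fin r) (Fin r) K := (G.map ⇑φ)ᵀ with hA
  have hAc : A *ᵥ c = fun k => bform aK w (fun j => φ (e k j)) := by
    funext k
    rw [hkey k]
    simp [hA, Matrix.mulVec, dotProduct, mul_comm]
  have hGc : ∀ i, φ G.det * c i
      = ∑ k, A.adjugate i k * bform aK w (fun j => φ (e k j)) := by
    intro i
    have h1 : A.adjugate *ᵥ (A *ᵥ c) = φ G.det • c := by
      rw [Matrix.mulVec_mulVec, Matrix.adjugate_mul, Matrix.smul_mulVec,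
        Matrix.one_mulVec, hA, Matrix.det_transpose, ← RingHom.mapMatrix_apply,
        ← RingHom.map_det]
    have h2 := congrFun h1 i
    rw [hAc] at h2
    rw [show φ G.det * c i = (φ G.det • c) i from rfl, ← h2]
    simp [Matrix.mulVec, dotProduct]
  have hφint : ∀ x : F, IsIntegral ℤ x → IsIntegral ℤ (φ x) := fun x hx =>
    hx.map φ.toIntAlgHom
  have hadj : ∀ i k, IsIntegral ℤ (A.adjugate i k) := by
    intro i k
    let Ai : Matrix (Fin r) (Fin r) (𝓞 K) :=
      Matrix.of fun i k => (⟨φ (G k i), hφint _ (hGint k i)⟩ : 𝓞 K)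
    have hAi : A = Ai.map (algebraMap (𝓞 K) K) := by
      funext i k
      rfl
    rw [hAi, ← RingHom.mapMatrix_apply, ← RingHom.map_adjugate, RingHom.mapMatrix_apply,
      Matrix.map_apply]
    exact (Ai.adjugate i k).2
  have hci : ∀ i, IsIntegral ℤ ((y.natAbs : K) * c i) := by
    intro i
    have h1 : IsIntegral ℤ (φ G.det * c i) := by
      rw [hGc i]
      have hmem : (∑ k, A.adjugate i k * bform aK w (fun j => φ (e k j)))
          ∈ integralClosure ℤ K :=
        Subalgebra.sum_mem _ fun k _ =>
          mul_mem (show A.adjugate i k ∈ integralClosure ℤ K from hadj i k)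
            (show bform aK w (fun j => φ (e k j)) ∈ integralClosure ℤ K from hbint k)
      exact hmem
    have hGdetK : φ G.det ≠ 0 := fun hh => hGdet (hφinj (by rw [hh, map_zero]))
    have h2 : (y.natAbs : K) * c i = φ ((y.natAbs : F) * G.det⁻¹) * (φ G.det * c i) := by
      rw [_root_.map_mul, map_inv₀, map_natCast]
      field_simp
    rw [h2]
    exact (hφint _ hmint).mul h1
  have hfinal : y.natAbs • w = ∑ i, (⟨(y.natAbs : K) * c i, hci i⟩ : 𝓞 K) •
      (fun j => φ (e i j)) := by
    funext j
    rw [Finset.sum_apply]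
    rw [Pi.smul_apply, nsmul_eq_mul, hwc j, Finset.mul_sum]
    refine Finset.sum_congr rfl fun i _ => ?_
    rw [Pi.smul_apply, Algebra.smul_def]
    exact (mul_assoc _ _ _).symm
  rw [hfinal]
  exact Submodule.sum_smul_mem _ _ fun i _ => heK i
end
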